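/- arXiv:1710.06757 — 3 statements merged into one kernel-verified Lean document; each statement's English description precedes it below -/
import Mathlib

section
/- Any triangulation of a convex polygon on n+2 points contains at most one t-gonal tiling as a subgraph. -/
/-- A plane (non-crossing) perfect matching on the `2n` points `0, …, 2n-1`
in convex position. -/
structure NCMatching (n : ℕ) where
  pairs : Finset (ℕ × ℕ)
  mem_lt : ∀ p ∈ pairs, p.1 < p.2 ∧ p.2 < 2 * n
  covers : ∀ v, v < 2 * n → ∃! p, p ∈ pairs ∧ (p.1 = v ∨ p.2 = v)
  noncross : ∀ p ∈ pairs, ∀ q ∈ pairs, ¬ (p.1 < q.1 ∧ q.1 < p.2 ∧ p.2 < q.2)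

/-- Outdegree of vertex `v` (1 if `v` is matched to a larger vertex, else 0). -/
def NCMatching.out {n : ℕ} (M : NCMatching n) (v : ℕ) : ℕ :=
  (M.pairs.filter fun p => p.1 = v).card

/-- The outdegree sequence `(b_1, …, b_{2n})` of a matching. -/
def NCMatching.outList {n : ℕ} (M : NCMatching n) : List ℕ :=
  (List.range (2 * n)).map M.out

/-- A triangulation of the convex polygon with vertices `0, …, n+1` in convex
position: a maximal set of pairwise non-crossing diagonals (`n-1` many). -/
structure Triangulation (n : ℕ) where
  diag : Finset (ℕ × ℕ)
  isDiag : ∀ e ∈ diag, e.1 + 2 ≤ e.2 ∧ e.2 ≤ n + 1 ∧ ¬(e.1 = 0 ∧ e.2 = n + 1)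
  noncross : ∀ e ∈ diag, ∀ f ∈ diag, ¬ (e.1 < f.1 ∧ f.1 < e.2 ∧ e.2 < f.2)
  card_diag : diag.card = n - 1

/-- Outdegree of point `i` in a triangulation: edges are directed from lower to
higher index; hull edges are not counted, except `p_1 p_{n+2}` (counted at `0`). -/
def Triangulation.out {n : ℕ} (T : Triangulation n) (i : ℕ) : ℕ :=
  (T.diag.filter fun e => e.1 = i).card + (if i = 0 then 1 else 0)

/-- The outdegree sequence `(d_1, …, d_n)` of a triangulation. -/
def Triangulation.outList {n : ℕ} (T : Triangulation n) : List ℕ :=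
  (List.range n).map T.out

/-- Ballot sequences of length `2n`: 0/1 sequences with `n` ones whose every
prefix has at least as many ones as zeros. -/
def IsBallot (n : ℕ) (l : List ℕ) : Prop :=
  l.length = 2 * n ∧ (∀ x ∈ l, x = 0 ∨ x = 1) ∧ l.sum = n ∧
    ∀ m, m ≤ 2 * n → m ≤ 2 * (l.take m).sum

/-- Valid outdegree sequences of triangulations of a convex `(n+2)`-gon. -/
def IsTriDeg (n : ℕ) (d : List ℕ) : Prop :=
  d.length = n ∧ d.sum = n ∧ ∀ l, l ≤ n → (d.reverse.take l).sum ≤ l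

/-- From a degree sequence `(d_1,…,d_n)` to the ballot sequence consisting of
`d_i` ones followed by a zero, for each `i`. -/
def degToBallot (d : List ℕ) : List ℕ :=
  (d.map fun x => List.replicate x 1 ++ [0]).flatten

/-- From a ballot sequence `B` to the sequence `(d_1,…,d_n)` where `d_i` is the
number of ones between the `(i-1)`-st and the `i`-th zero of `B`. -/
def ballotToDeg (B : List ℕ) : List ℕ :=
  ((B.splitOn 0).map List.length).dropLast

/-- The bitonic `k`-coloring `c_1,…,c_k,c_k,…,c_1,c_1,…` of the vertices. -/
def bitColor (k i : ℕ) : ℕ :=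
  if (i / k) % 2 = 0 then i % k else k - 1 - i % k

/-- A perfect `k`-colored (monochromatic) matching: every edge joins two
vertices of the same color. -/
def Mono (k : ℕ) {n : ℕ} (M : NCMatching n) : Prop :=
  ∀ p ∈ M.pairs, bitColor k p.1 = bitColor k p.2

/-- Valid block structure: within each block of `k` consecutive vertices, every
vertex with an outgoing edge is followed only by vertices with outgoing edges. -/
def ValidBlock (k : ℕ) {n : ℕ} (M : NCMatching n) : Prop :=
  ∀ u v, v < 2 * n → u / k = v / k → u < v → M.out u = 1 → M.out v = 1

/-- The hull edges of the convex polygon on `0, …, n+1`. -/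
def hullEdges (n : ℕ) : Finset (ℕ × ℕ) :=
  ((Finset.range (n + 1)).image fun i => (i, i + 1)) ∪ {(0, n + 1)}

/-- The edges of the face with vertex set `S` (in convex position): consecutive
pairs of `S` together with the pair `(min S, max S)`. -/
def faceEdges (S : Finset ℕ) : Finset (ℕ × ℕ) :=
  (S ×ˢ S).filter fun p => p.1 < p.2 ∧
    ((∀ c ∈ S, ¬ (p.1 < c ∧ c < p.2)) ∨ (∀ c ∈ S, p.1 ≤ c ∧ c ≤ p.2))

/-- A `t`-gonal tiling of the convex polygon on the points `0, …, n+1`: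
a plane graph all of whose bounded faces are `t`-gons, given by its set of
(bounded) faces. -/
structure Tiling (t n : ℕ) where
  faces : Finset (Finset ℕ)
  sub : ∀ S ∈ faces, S ⊆ Finset.range (n + 2)
  size : ∀ S ∈ faces, S.card = t
  noncross : ∀ S ∈ faces, ∀ S' ∈ faces, ∀ e ∈ faceEdges S, ∀ e' ∈ faceEdges S',
      ¬ (e.1 < e'.1 ∧ e'.1 < e.2 ∧ e.2 < e'.2)
  share : ∀ S ∈ faces, ∀ S' ∈ faces, S ≠ S' → (S ∩ S').card ≤ 2
  boundary : ∀ e ∈ hullEdges n, (faces.filter fun S => e ∈ faceEdges S).card = 1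
  interior : ∀ S ∈ faces, ∀ e ∈ faceEdges S, e ∉ hullEdges n →
      (faces.filter fun S' => e ∈ faceEdges S').card = 2

/-- The dual graph of a tiling: one vertex per bounded face, two faces adjacent
iff they share a common edge. -/
def dualGraph {t n : ℕ} (T : Tiling t n) : SimpleGraph {S // S ∈ T.faces} where
  Adj A B := A ≠ B ∧ (faceEdges A.1 ∩ faceEdges B.1).Nonempty
  symm := by
    constructor
    rintro A B ⟨h1, h2⟩
    exact ⟨Ne.symm h1, by rwa [Finset.inter_comm]⟩
  loopless := by constructor; rintro A ⟨h, -⟩; exact h rfl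

/-- An ear of a tiling: a face all but one of whose edges lie on the hull. -/
def IsEar {t n : ℕ} (T : Tiling t n) (S : Finset ℕ) : Prop :=
  S ∈ T.faces ∧ (faceEdges S \ hullEdges n).card = 1

/-- A tiling is a subgraph of a triangulation if each of its non-hull edges is
a diagonal of the triangulation. -/
def SubTri {t n : ℕ} (T : Tiling t n) (𝒯 : Triangulation n) : Prop :=
  ∀ S ∈ T.faces, ∀ e ∈ faceEdges S, e ∉ hullEdges n → e ∈ 𝒯.diag

/-- A triangulation is `k`-color valid if, under the outdegree-sequence
bijection, it corresponds to a perfect `k`-colored matching. -/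
def KColorValidTri (k : ℕ) {n : ℕ} (𝒯 : Triangulation n) : Prop :=
  ∃ M : NCMatching n, Mono k M ∧ M.outList = degToBallot 𝒯.outList

/-- A `(k+2)`-gonal tiling is `k`-color valid if it is a subgraph of some
`k`-color valid triangulation. -/
def KColorValidTiling (k : ℕ) {n : ℕ} (T : Tiling (k + 2) n) : Prop :=
  ∃ 𝒯 : Triangulation n, KColorValidTri k 𝒯 ∧ SubTri T 𝒯
namespace Stmt11

def Cr (e f : ℕ × ℕ) : Prop := e.1 < f.1 ∧ f.1 < e.2 ∧ e.2 < f.2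

def Consec (S : Finset ℕ) (u v : ℕ) : Prop :=
  u ∈ S ∧ v ∈ S ∧ u < v ∧ ∀ c ∈ S, ¬(u < c ∧ c < v)

lemma mem_faceEdges {S : Finset ℕ} {a b : ℕ} :
    (a, b) ∈ faceEdges S ↔ a ∈ S ∧ b ∈ S ∧ a < b ∧
      ((∀ c ∈ S, ¬(a < c ∧ c < b)) ∨ (∀ c ∈ S, a ≤ c ∧ c ≤ b)) := by
  unfold faceEdges
  simp only [Finset.mem_filter, Finset.mem_product]
  tauto

lemma consec_edge {S : Finset ℕ} {u v : ℕ} (h : Consec S u v) : (u, v) ∈ faceEdges S :=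
  mem_faceEdges.mpr ⟨h.1, h.2.1, h.2.2.1, Or.inl h.2.2.2⟩

lemma long_edge {S : Finset ℕ} {a b : ℕ} (ha : a ∈ S) (hb : b ∈ S) (hab : a < b)
    (h : ∀ c ∈ S, a ≤ c ∧ c ≤ b) : (a, b) ∈ faceEdges S :=
  mem_faceEdges.mpr ⟨ha, hb, hab, Or.inr h⟩

lemma mem_hullEdges {n : ℕ} {e : ℕ × ℕ} :
    e ∈ hullEdges n ↔ (∃ i, i ≤ n ∧ e = (i, i + 1)) ∨ e = (0, n + 1) := by
  unfold hullEdges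
  simp only [Finset.mem_union, Finset.mem_image, Finset.mem_range, Finset.mem_singleton]
  constructor
  · rintro (⟨i, hi, rfl⟩ | h)
    · exact Or.inl ⟨i, by omega, rfl⟩
    · exact Or.inr h
  · rintro (⟨i, hi, rfl⟩ | h)
    · exact Or.inl ⟨i, by omega, rfl⟩
    · exact Or.inr h

lemma hull_ncr_fst {n : ℕ} {e f : ℕ × ℕ} (he : e ∈ hullEdges n) (hf : f.2 ≤ n + 1) :
    ¬ Cr e f := by
  rcases mem_hullEdges.mp he with ⟨i, hi, rfl⟩ | rfl <;>
    (rintro ⟨a, b, c⟩; dsimp at a b c; omega)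

lemma hull_ncr_snd {n : ℕ} {e f : ℕ × ℕ} (hf : f ∈ hullEdges n) : ¬ Cr e f := by
  rcases mem_hullEdges.mp hf with ⟨i, hi, rfl⟩ | rfl <;>
    (rintro ⟨a, b, c⟩; dsimp at a b c; omega)

lemma edges_ncr {t n : ℕ} (𝒯 : Triangulation n) {Ta Tb : Tiling t n}
    (h1 : SubTri Ta 𝒯) (h2 : SubTri Tb 𝒯) {Sa Sb : Finset ℕ} {e f : ℕ × ℕ}
    (hSa : Sa ∈ Ta.faces) (hSb : Sb ∈ Tb.faces)
    (he : e ∈ faceEdges Sa) (hf : f ∈ faceEdges Sb) : ¬ Cr e f := by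
  by_cases hfh : f ∈ hullEdges n
  · exact hull_ncr_snd hfh
  have hfd : f ∈ 𝒯.diag := h2 Sb hSb f hf hfh
  by_cases heh : e ∈ hullEdges n
  · exact hull_ncr_fst heh (𝒯.isDiag f hfd).2.1
  · exact fun h => 𝒯.noncross e (h1 Sa hSa e he heh) f hfd ⟨h.1, h.2.1, h.2.2⟩

lemma edge_diag_ncr {t n : ℕ} (𝒯 : Triangulation n) {Ta : Tiling t n}
    (h1 : SubTri Ta 𝒯) {Sa : Finset ℕ} {e f : ℕ × ℕ}
    (hSa : Sa ∈ Ta.faces) (he : e ∈ faceEdges Sa) (hf : f ∈ 𝒯.diag) :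
    ¬ Cr e f ∧ ¬ Cr f e := by
  constructor
  · by_cases heh : e ∈ hullEdges n
    · exact hull_ncr_fst heh (𝒯.isDiag f hf).2.1
    · exact fun h => 𝒯.noncross e (h1 Sa hSa e he heh) f hf ⟨h.1, h.2.1, h.2.2⟩
  · by_cases heh : e ∈ hullEdges n
    · exact hull_ncr_snd heh
    · exact fun h => 𝒯.noncross f hf e (h1 Sa hSa e he heh) ⟨h.1, h.2.1, h.2.2⟩

lemma face_le {t n : ℕ} {T : Tiling t n} {S : Finset ℕ} (hS : S ∈ T.faces) {z : ℕ}
    (hz : z ∈ S) : z ≤ n + 1 := by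
  have := Finset.mem_range.mp (T.sub S hS hz); omega

lemma face_span {t n : ℕ} (ht : 3 ≤ t) {T : Tiling t n} {S : Finset ℕ} (hS : S ∈ T.faces)
    {A B : ℕ} (hb : ∀ z ∈ S, A ≤ z ∧ z ≤ B) : A + 2 ≤ B := by
  have hsub : S ⊆ Finset.Icc A B := fun z hz => Finset.mem_Icc.mpr (hb z hz)
  have h1 := Finset.card_le_card hsub
  rw [Nat.card_Icc] at h1
  have h2 := T.size S hS
  omega

lemma consec_not_ends {t n : ℕ} (ht : 3 ≤ t) {T : Tiling t n} {S : Finset ℕ}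
    (hS : S ∈ T.faces) {A B : ℕ} (hb : ∀ z ∈ S, A ≤ z ∧ z ≤ B) (hc : Consec S A B) :
    False := by
  have hcard := T.size S hS
  have hsub : S ⊆ ({A, B} : Finset ℕ) := by
    intro z hz
    have h1 := hb z hz
    have h2 := hc.2.2.2 z hz
    simp only [Finset.mem_insert, Finset.mem_singleton]
    omega
  have h3 := Finset.card_le_card hsub
  have h4 : ({A, B} : Finset ℕ).card ≤ 2 :=
    le_trans (Finset.card_insert_le _ _) (by simp)
  omega

lemma pred_spec {S : Finset ℕ} {w c : ℕ} (hw : w ∈ S) (hwc : w < c) :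
    ∃ p, p ∈ S ∧ p < c ∧ w ≤ p ∧ ∀ z ∈ S, z < c → z ≤ p := by
  have hne : (S.filter (· < c)).Nonempty := ⟨w, Finset.mem_filter.mpr ⟨hw, hwc⟩⟩
  have hm := Finset.mem_filter.mp ((S.filter (· < c)).max'_mem hne)
  exact ⟨(S.filter (· < c)).max' hne, hm.1, hm.2,
    Finset.le_max' (S.filter (· < c)) w (Finset.mem_filter.mpr ⟨hw, hwc⟩),
    fun z hz hzc => Finset.le_max' (S.filter (· < c)) z (Finset.mem_filter.mpr ⟨hz, hzc⟩)⟩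

lemma succ_spec {S : Finset ℕ} {w c : ℕ} (hw : w ∈ S) (hwc : c < w) :
    ∃ q, q ∈ S ∧ c < q ∧ q ≤ w ∧ ∀ z ∈ S, c < z → q ≤ z := by
  have hne : (S.filter (c < ·)).Nonempty := ⟨w, Finset.mem_filter.mpr ⟨hw, hwc⟩⟩
  have hm := Finset.mem_filter.mp ((S.filter (c < ·)).min'_mem hne)
  exact ⟨(S.filter (c < ·)).min' hne, hm.1, hm.2,
    Finset.min'_le (S.filter (c < ·)) w (Finset.mem_filter.mpr ⟨hw, hwc⟩),
    fun z hz hzc => Finset.min'_le (S.filter (c < ·)) z (Finset.mem_filter.mpr ⟨hz, hzc⟩)⟩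

end Stmt11
namespace Stmt11

lemma sepL {t n : ℕ} (𝒯 : Triangulation n) {Ta Tb : Tiling t n}
    (h1 : SubTri Ta 𝒯) (h2 : SubTri Tb 𝒯) {P W : Finset ℕ}
    (hP : P ∈ Ta.faces) (hW : W ∈ Tb.faces) {α β x y : ℕ}
    (he : (α, β) ∈ faceEdges W) (hx : x ∈ P) (hαx : α < x) (hxβ : x < β)
    (hy : y ∈ P) (hyα : y < α) (hαP : α ∉ P) : False := by
  obtain ⟨p, hp, hpα, -, hpmax⟩ := pred_spec hy hyα
  obtain ⟨q, hq, hαq, hqx, hqmin⟩ := succ_spec hx hαx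
  have hcons : Consec P p q := by
    refine ⟨hp, hq, by omega, fun z hz hzz => ?_⟩
    rcases lt_trichotomy z α with h | h | h
    · exact absurd (hpmax z hz h) (by omega)
    · exact hαP (h ▸ hz)
    · exact absurd (hqmin z hz h) (by omega)
  exact edges_ncr 𝒯 h1 h2 hP hW (consec_edge hcons) he
    ⟨by dsimp; omega, by dsimp; omega, by dsimp; omega⟩

lemma sepR {t n : ℕ} (𝒯 : Triangulation n) {Ta Tb : Tiling t n}
    (h1 : SubTri Ta 𝒯) (h2 : SubTri Tb 𝒯) {P W : Finset ℕ}
    (hP : P ∈ Ta.faces) (hW : W ∈ Tb.faces) {α β x y : ℕ}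
    (he : (α, β) ∈ faceEdges W) (hx : x ∈ P) (hαx : α < x) (hxβ : x < β)
    (hy : y ∈ P) (hβy : β < y) (hβP : β ∉ P) : False := by
  obtain ⟨p, hp, hpβ, hxp, hpmax⟩ := pred_spec hx hxβ
  obtain ⟨q, hq, hβq, -, hqmin⟩ := succ_spec hy hβy
  have hcons : Consec P p q := by
    refine ⟨hp, hq, by omega, fun z hz hzz => ?_⟩
    rcases lt_trichotomy z β with h | h | h
    · exact absurd (hpmax z hz h) (by omega)
    · exact hβP (h ▸ hz)
    · exact absurd (hqmin z hz h) (by omega)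
  exact edges_ncr 𝒯 h2 h1 hW hP he (consec_edge hcons)
    ⟨by dsimp; omega, by dsimp; omega, by dsimp; omega⟩

lemma step {t n : ℕ} (ht : 3 ≤ t) (𝒯 : Triangulation n) {T : Tiling t n}
    (h1 : SubTri T 𝒯) {S : Finset ℕ} (hS : S ∈ T.faces) {A B u v : ℕ}
    (hA : A ∈ S) (hB : B ∈ S) (hb : ∀ z ∈ S, A ≤ z ∧ z ≤ B)
    (hc : Consec S u v) (huv : u + 1 < v) :
    ∃ P ∈ T.faces, u ∈ P ∧ v ∈ P ∧ ∀ z ∈ P, u ≤ z ∧ z ≤ v := by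
  obtain ⟨huS, hvS, hultv, hmid⟩ := hc
  have hAu : A ≤ u := (hb u huS).1
  have hvB : v ≤ B := (hb v hvS).2
  have hAB : A + 2 ≤ B := face_span ht hS hb
  have hne : ¬(u = A ∧ v = B) := by
    rintro ⟨rfl, rfl⟩
    exact consec_not_ends ht hS hb ⟨huS, hvS, hultv, hmid⟩
  have hedge : (u, v) ∈ faceEdges S := consec_edge ⟨huS, hvS, hultv, hmid⟩
  have hnh : (u, v) ∉ hullEdges n := by
    intro hmem
    rcases mem_hullEdges.mp hmem with ⟨i, hi, hpair⟩ | hpair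
    · have e1 : u = i := congrArg Prod.fst hpair
      have e2 : v = i + 1 := congrArg Prod.snd hpair
      omega
    · have e1 : u = 0 := congrArg Prod.fst hpair
      have e2 : v = n + 1 := congrArg Prod.snd hpair
      have e3 : B ≤ n + 1 := face_le hS hB
      exact hne ⟨by omega, by omega⟩
  have hcount := T.interior S hS (u, v) hedge hnh
  obtain ⟨P, hPin, hPne⟩ := Finset.exists_mem_ne (by rw [hcount]; norm_num) S
  obtain ⟨hPf, hPe⟩ := Finset.mem_filter.mp hPin
  obtain ⟨huP, hvP, -, -⟩ := mem_faceEdges.mp hPe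
  refine ⟨P, hPf, huP, hvP, ?_⟩
  have hshare : (S ∩ P).card ≤ 2 := T.share S hS P hPf (Ne.symm hPne)
  have hInt : ∀ z, z ∈ S → z ∈ P → z = u ∨ z = v := by
    intro z hzS hzP
    have hsub2 : ({u, v} : Finset ℕ) ⊆ S ∩ P := by
      intro w hw
      rcases Finset.mem_insert.mp hw with rfl | hw
      · exact Finset.mem_inter.mpr ⟨huS, huP⟩
      · rw [Finset.mem_singleton] at hw
        subst hw
        exact Finset.mem_inter.mpr ⟨hvS, hvP⟩
    have hcard2 : ({u, v} : Finset ℕ).card = 2 := Finset.card_pair (by omega)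
    have heq := Finset.eq_of_subset_of_card_le hsub2 (by omega)
    have hz2 : z ∈ ({u, v} : Finset ℕ) := heq ▸ Finset.mem_inter.mpr ⟨hzS, hzP⟩
    simpa using hz2
  have hPcard : P.card = t := T.size P hPf
  have hPnemp : P.Nonempty := by rw [← Finset.card_pos, hPcard]; omega
  have hm'P : P.min' hPnemp ∈ P := Finset.min'_mem _ _
  have hM'P : P.max' hPnemp ∈ P := Finset.max'_mem _ _
  set m' := P.min' hPnemp with hm'def
  set M' := P.max' hPnemp with hM'def
  have hm'u : m' ≤ u := Finset.min'_le _ _ huP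
  have hvM' : v ≤ M' := Finset.le_max' _ _ hvP
  have hlongP : (m', M') ∈ faceEdges P :=
    long_edge hm'P hM'P (by omega)
      (fun z hz => ⟨Finset.min'_le _ _ hz, Finset.le_max' _ _ hz⟩)
  have hlongS : (A, B) ∈ faceEdges S := long_edge hA hB (by omega) hb
  have hAP : A ∈ P → A = u := by
    intro hA'
    rcases hInt A hA hA' with h | h
    · exact h
    · omega
  have hBP : B ∈ P → B = v := by
    intro hB'
    rcases hInt B hB hB' with h | h
    · omega
    · exact h
  intro x hxP
  by_contra hcon
  push_neg at hcon
  have hm'x : m' ≤ x := Finset.min'_le _ _ hxP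
  have hxM' : x ≤ M' := Finset.le_max' _ _ hxP
  have hxS : x ∉ S := by
    intro hxS'
    rcases hInt x hxS' hxP with h | h <;> omega
  rcases Nat.lt_or_ge x u with hxu | hxu
  · -- x < u
    by_cases huA : u = A
    · -- u = A, so v < B
      have hvltB : v < B := by
        rcases Nat.eq_or_lt_of_le hvB with h | h
        · exact absurd ⟨huA, h⟩ hne
        · exact h
      have hBnP : B ∉ P := fun h => by have := hBP h; omega
      rcases lt_trichotomy M' B with hMB | hMB | hMB
      · exact edges_ncr 𝒯 h1 h1 hPf hS hlongP hlongS
          ⟨by dsimp; omega, by dsimp; omega, by dsimp; omega⟩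
      · exact hBnP (hMB ▸ hM'P)
      · exact sepR 𝒯 h1 h1 hPf hS hlongS hvP (by omega) hvltB hM'P hMB hBnP
    · have hAu' : A < u := by omega
      have hAnP : A ∉ P := fun h => by have := hAP h; omega
      rcases lt_trichotomy x A with hxA | hxA | hxA
      · exact sepL 𝒯 h1 h1 hPf hS hlongS huP hAu' (by omega) hxP hxA hAnP
      · exact hAnP (hxA ▸ hxP)
      · -- A < x < u
        obtain ⟨α, hαS, hαltx, hAα, hαmax⟩ := pred_spec hA hxA
        obtain ⟨β, hβS, hxltβ, hβu, hβmin⟩ := succ_spec huS hxu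
        have hconsαβ : Consec S α β := by
          refine ⟨hαS, hβS, by omega, fun z hz hzz => ?_⟩
          rcases lt_trichotomy z x with h | h | h
          · exact absurd (hαmax z hz h) (by omega)
          · exact hxS (h ▸ hz)
          · exact absurd (hβmin z hz h) (by omega)
        by_cases hβu' : β < u
        · have hβnP : β ∉ P := by
            intro h
            rcases hInt β hβS h with h' | h' <;> omega
          exact sepR 𝒯 h1 h1 hPf hS (consec_edge hconsαβ) hxP hαltx hxltβ hvP (by omega) hβnP
        · have hβeq : β = u := by omega
          have hαnP : α ∉ P := by
            intro h
            rcases hInt α hαS h with h' | h' <;> omega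
          rcases lt_trichotomy m' α with hmα | hmα | hmα
          · exact sepL 𝒯 h1 h1 hPf hS (consec_edge hconsαβ) hxP hαltx hxltβ hm'P hmα hαnP
          · exact hαnP (hmα ▸ hm'P)
          · exact edges_ncr 𝒯 h1 h1 hS hPf (consec_edge hconsαβ) hlongP
              ⟨by dsimp; omega, by dsimp; omega, by dsimp; omega⟩
  · -- u ≤ x, so v < x
    have hvx : v < x := hcon hxu
    by_cases hvB' : v = B
    · have huA : A < u := by
        rcases Nat.eq_or_lt_of_le hAu with h | h
        · exact absurd ⟨h.symm, hvB'⟩ hne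
        · exact h
      have hAnP : A ∉ P := fun h => by have := hAP h; omega
      rcases lt_trichotomy m' A with hmA | hmA | hmA
      · exact sepL 𝒯 h1 h1 hPf hS hlongS huP huA (by omega) hm'P hmA hAnP
      · exact hAnP (hmA ▸ hm'P)
      · exact edges_ncr 𝒯 h1 h1 hS hPf hlongS hlongP
          ⟨by dsimp; omega, by dsimp; omega, by dsimp; omega⟩
    · have hvltB : v < B := by omega
      have hBnP : B ∉ P := fun h => by have := hBP h; omega
      rcases lt_trichotomy x B with hxB | hxB | hxB
      · -- v < x < B
        obtain ⟨α, hαS, hαltx, hvα, hαmax⟩ := pred_spec hvS hvx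
        obtain ⟨β, hβS, hxltβ, hβB, hβmin⟩ := succ_spec hB hxB
        have hconsαβ : Consec S α β := by
          refine ⟨hαS, hβS, by omega, fun z hz hzz => ?_⟩
          rcases lt_trichotomy z x with h | h | h
          · exact absurd (hαmax z hz h) (by omega)
          · exact hxS (h ▸ hz)
          · exact absurd (hβmin z hz h) (by omega)
        by_cases hαv : v < α
        · have hαnP : α ∉ P := by
            intro h
            rcases hInt α hαS h with h' | h' <;> omega
          exact sepL 𝒯 h1 h1 hPf hS (consec_edge hconsαβ) hxP hαltx hxltβ huP (by omega) hαnP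
        · have hαveq : α = v := by omega
          have hβnP : β ∉ P := by
            intro h
            rcases hInt β hβS h with h' | h' <;> omega
          rcases lt_trichotomy M' β with hMβ | hMβ | hMβ
          · exact edges_ncr 𝒯 h1 h1 hPf hS hlongP (consec_edge hconsαβ)
              ⟨by dsimp; omega, by dsimp; omega, by dsimp; omega⟩
          · exact hβnP (hMβ ▸ hM'P)
          · exact sepR 𝒯 h1 h1 hPf hS (consec_edge hconsαβ) hxP hαltx hxltβ hM'P hMβ hβnP
      · exact hBnP (hxB ▸ hxP)
      · exact sepR 𝒯 h1 h1 hPf hS hlongS hvP (by omega) hvltB hxP hxB hBnP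

end Stmt11
namespace Stmt11

lemma gapwalk {t : ℕ} (S : Finset ℕ) (a : ℕ) (ha : a ∈ S)
    (H : ∀ p q, p ∈ S → q ∈ S → p < q → (∀ z ∈ S, ¬(p < z ∧ z < q)) →
      ((t:ℤ) - 2) ∣ ((q:ℤ) - p - 1)) :
    ∀ b, b ∈ S → a ≤ b →
      ((t:ℤ) - 2) ∣ ((b:ℤ) - a - ((S.filter (fun z => a < z ∧ z ≤ b)).card : ℤ)) := by
  intro b
  induction b using Nat.strong_induction_on with
  | _ b ih =>
    intro hb hab
    rcases Nat.eq_or_lt_of_le hab with rfl | hlt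
    · have hemp : S.filter (fun z => a < z ∧ z ≤ a) = ∅ :=
        Finset.filter_eq_empty_iff.mpr (fun {z} _ => by omega)
      rw [hemp]
      simp
    · obtain ⟨p, hpS, hplt, hap, hpmax⟩ := pred_spec ha hlt
      have hmid : ∀ z ∈ S, ¬(p < z ∧ z < b) := fun z hz hzz =>
        absurd (hpmax z hz hzz.2) (by omega)
      have hd1 := H p b hpS hb (by omega) hmid
      have hd2 := ih p hplt hpS hap
      have hcardeq : (S.filter (fun z => a < z ∧ z ≤ b))
          = insert b (S.filter (fun z => a < z ∧ z ≤ p)) := by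
        ext z
        simp only [Finset.mem_filter, Finset.mem_insert]
        constructor
        · rintro ⟨hzS, hz1, hz2⟩
          rcases Nat.eq_or_lt_of_le hz2 with rfl | hz3
          · exact Or.inl rfl
          · exact Or.inr ⟨hzS, hz1, hpmax z hzS hz3⟩
        · rintro (rfl | ⟨hzS, hz1, hz2⟩)
          · exact ⟨hb, by omega, le_refl _⟩
          · exact ⟨hzS, hz1, by omega⟩
      rw [hcardeq, Finset.card_insert_of_notMem (by
        simp only [Finset.mem_filter, not_and]
        intro _ _
        omega)]
      push_cast
      have harr : (b:ℤ) - a - (((S.filter (fun z => a < z ∧ z ≤ p)).card : ℤ) + 1) =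
          ((p:ℤ) - a - ((S.filter (fun z => a < z ∧ z ≤ p)).card : ℤ)) + ((b:ℤ) - p - 1) := by
        ring
      rw [harr]
      exact dvd_add hd2 hd1

lemma bf_div {t n : ℕ} (ht : 3 ≤ t) (𝒯 : Triangulation n) {T : Tiling t n}
    (h1 : SubTri T 𝒯) :
    ∀ k A B, B - A ≤ k → (∃ S ∈ T.faces, A ∈ S ∧ B ∈ S ∧ ∀ z ∈ S, A ≤ z ∧ z ≤ B) →
    ((t:ℤ) - 2) ∣ ((B:ℤ) - A - 1) := by
  intro k
  induction k with
  | zero =>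
    rintro A B hk ⟨S, hS, hA, hB, hb⟩
    have := face_span ht hS hb
    exfalso
    omega
  | succ k ih =>
    rintro A B hk ⟨S, hS, hA, hB, hb⟩
    have hAB := face_span ht hS hb
    have H : ∀ p q, p ∈ S → q ∈ S → p < q → (∀ z ∈ S, ¬(p < z ∧ z < q)) →
        ((t:ℤ) - 2) ∣ ((q:ℤ) - p - 1) := by
      intro p q hp hq hpq hmid
      by_cases hq1 : q = p + 1
      · subst hq1
        simp
      · have hbf := step ht 𝒯 h1 hS hA hB hb ⟨hp, hq, hpq, hmid⟩ (by omega)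
        have hne : ¬(p = A ∧ q = B) := by
          rintro ⟨rfl, rfl⟩
          exact consec_not_ends ht hS hb ⟨hp, hq, hpq, hmid⟩
        have h1p := (hb p hp).1
        have h2q := (hb q hq).2
        have hor : A < p ∨ q < B := by
          rcases Nat.eq_or_lt_of_le h1p with h | h
          · rcases Nat.eq_or_lt_of_le h2q with h' | h'
            · exact absurd ⟨h.symm, h'⟩ hne
            · exact Or.inr h'
          · exact Or.inl h
        exact ih p q (by omega) hbf
    have hgw := gapwalk S A hA H B hB (by omega)
    have hfe : S.filter (fun z => A < z ∧ z ≤ B) = S.erase A := by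
      ext z
      simp only [Finset.mem_filter, Finset.mem_erase]
      constructor
      · rintro ⟨hz, h1z, h2z⟩
        exact ⟨by omega, hz⟩
      · rintro ⟨hzA, hz⟩
        have := hb z hz
        exact ⟨hz, by omega, this.2⟩
    rw [hfe, Finset.card_erase_of_mem hA, T.size S hS] at hgw
    rw [Nat.cast_sub (by omega : 1 ≤ t)] at hgw
    have harr : (B:ℤ) - A - 1 = ((B:ℤ) - A - ((t:ℤ) - 1)) + ((t:ℤ) - 2) := by ring
    rw [harr]
    exact dvd_add hgw (dvd_refl _)

lemma edgediv {t n : ℕ} (ht : 3 ≤ t) (𝒯 : Triangulation n) {T : Tiling t n}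
    (h1 : SubTri T 𝒯) {S : Finset ℕ} (hS : S ∈ T.faces) {a b : ℕ}
    (he : (a, b) ∈ faceEdges S) : ((t:ℤ) - 2) ∣ ((b:ℤ) - a - 1) := by
  obtain ⟨ha, hb', hab, hd⟩ := mem_faceEdges.mp he
  rcases hd with hmid | hbnd
  · by_cases hb1 : b = a + 1
    · subst hb1
      simp
    · have hne : S.Nonempty := by
        have := T.size S hS
        rw [← Finset.card_pos, this]
        omega
      have hbf := step ht 𝒯 h1 hS (S.min'_mem hne) (S.max'_mem hne)
        (fun z hz => ⟨S.min'_le z hz, S.le_max' z hz⟩) ⟨ha, hb', hab, hmid⟩ (by omega)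
      exact bf_div ht 𝒯 h1 (b - a) a b le_rfl hbf
  · exact bf_div ht 𝒯 h1 (b - a) a b le_rfl ⟨S, hS, ha, hb', hbnd⟩

lemma root {t n : ℕ} (T : Tiling t n) :
    ∃ S ∈ T.faces, 0 ∈ S ∧ (n + 1) ∈ S ∧ ∀ z ∈ S, 0 ≤ z ∧ z ≤ n + 1 := by
  have hmem : ((0:ℕ), n + 1) ∈ hullEdges n := mem_hullEdges.mpr (Or.inr rfl)
  have hcard := T.boundary (0, n + 1) hmem
  have hpos : (T.faces.filter (fun S => (0, n + 1) ∈ faceEdges S)).Nonempty := by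
    rw [← Finset.card_pos, hcard]
    norm_num
  obtain ⟨S, hSin⟩ := hpos
  obtain ⟨hSf, hSe⟩ := Finset.mem_filter.mp hSin
  obtain ⟨h0, h1', -, -⟩ := mem_faceEdges.mp hSe
  exact ⟨S, hSf, h0, h1', fun z hz => ⟨Nat.zero_le _, face_le hSf hz⟩⟩

end Stmt11
namespace Stmt11

lemma find {t n : ℕ} (ht : 3 ≤ t) (𝒯 : Triangulation n) {T : Tiling t n}
    (h2 : SubTri T 𝒯) :
    ∀ k A B, B - A ≤ k → (∃ S ∈ T.faces, A ∈ S ∧ B ∈ S ∧ ∀ z ∈ S, A ≤ z ∧ z ≤ B) →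
    ∀ a b, (a, b) ∈ 𝒯.diag → A ≤ a → b ≤ B → ((t:ℤ) - 2) ∣ ((b:ℤ) - a - 1) →
    ∃ P ∈ T.faces, a ∈ P ∧ b ∈ P ∧ ∀ z ∈ P, a ≤ z ∧ z ≤ b := by
  intro k
  induction k with
  | zero =>
    rintro A B hk ⟨S, hS, hA, hB, hb⟩ a b hd hAa hbB hdiv
    have := face_span ht hS hb
    exfalso
    omega
  | succ k ih =>
    rintro A B hk ⟨S, hS, hA, hB, hb⟩ a b hd hAa hbB hdiv
    have hab2 : a + 2 ≤ b := (𝒯.isDiag (a, b) hd).1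
    have hspan : A + 2 ≤ B := face_span ht hS hb
    by_cases hend : a = A ∧ b = B
    · refine ⟨S, hS, by rw [hend.1]; exact hA, by rw [hend.2]; exact hB, fun z hz => ?_⟩
      have := hb z hz
      omega
    · obtain ⟨u, huS, hua, hAu, humax⟩ := pred_spec hA (by omega : A < a + 1)
      obtain ⟨v, hvS, hbv, hvB, hvmin⟩ := succ_spec hB (by omega : b - 1 < B)
      have hua' : u ≤ a := by omega
      have hbv' : b ≤ v := by omega
      have hmid : ∀ z ∈ S, ¬(u < z ∧ z < v) := by
        rintro z hzS ⟨h1z, h2z⟩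
        have hza : ¬(z ≤ a) := fun h => absurd (humax z hzS (by omega)) (by omega)
        have hzb : ¬(b ≤ z) := fun h => absurd (hvmin z hzS (by omega)) (by omega)
        push_neg at hza hzb
        by_cases haS : a ∈ S
        · by_cases hbS : b ∈ S
          · -- congruence contradiction forces (a,b) = (A,B)
            have H : ∀ p q, p ∈ S → q ∈ S → p < q → (∀ w ∈ S, ¬(p < w ∧ w < q)) →
                ((t:ℤ) - 2) ∣ ((q:ℤ) - p - 1) :=
              fun p q hp hq hpq hm => edgediv ht 𝒯 h2 hS (consec_edge ⟨hp, hq, hpq, hm⟩)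
            have hgw := gapwalk S a haS H b hbS (by omega)
            set r := (S.filter (fun w => a < w ∧ w ≤ b)).card with hrdef
            have hzmem : z ∈ S.filter (fun w => a < w ∧ w ≤ b) :=
              Finset.mem_filter.mpr ⟨hzS, by omega, by omega⟩
            have hbmem : b ∈ S.filter (fun w => a < w ∧ w ≤ b) :=
              Finset.mem_filter.mpr ⟨hbS, by omega, le_rfl⟩
            have hr2 : 2 ≤ r := by
              have hsub : ({z, b} : Finset ℕ) ⊆ S.filter (fun w => a < w ∧ w ≤ b) := by
                intro w hw
                rcases Finset.mem_insert.mp hw with rfl | hw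
                · exact hzmem
                · rw [Finset.mem_singleton] at hw
                  subst hw
                  exact hbmem
              have hc2 : ({z, b} : Finset ℕ).card = 2 := Finset.card_pair (by omega)
              have := Finset.card_le_card hsub
              omega
            have hsub' : S.filter (fun w => a < w ∧ w ≤ b) ⊆ S.erase A := by
              intro w hw
              obtain ⟨hwS, hw1, hw2⟩ := Finset.mem_filter.mp hw
              exact Finset.mem_erase.mpr ⟨by omega, hwS⟩
            have hrt : r ≤ t - 1 := by
              have h5 := Finset.card_le_card hsub'
              rw [Finset.card_erase_of_mem hA, T.size S hS] at h5
              exact h5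
            have hdr : ((t:ℤ) - 2) ∣ ((r:ℤ) - 1) := by
              have h3 : ((r:ℤ) - 1) = ((b:ℤ) - a - 1) - ((b:ℤ) - a - r) := by ring
              rw [h3]
              exact dvd_sub hdiv hgw
            have hrpos : (0:ℤ) < (r:ℤ) - 1 := by
              have : (2:ℤ) ≤ (r:ℤ) := by exact_mod_cast hr2
              omega
            have hler := Int.le_of_dvd hrpos hdr
            have hreq : r = t - 1 := by omega
            have hfeq : S.filter (fun w => a < w ∧ w ≤ b) = S.erase A := by
              apply Finset.eq_of_subset_of_card_le hsub'
              rw [Finset.card_erase_of_mem hA, T.size S hS, ← hrdef, hreq]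
            have hBe : B ∈ S.erase A := Finset.mem_erase.mpr ⟨by omega, hB⟩
            rw [← hfeq] at hBe
            have hBb := (Finset.mem_filter.mp hBe).2.2
            have haA : a = A := by
              by_contra haA
              have h6 : a ∈ S.erase A := Finset.mem_erase.mpr ⟨haA, haS⟩
              rw [← hfeq] at h6
              have := (Finset.mem_filter.mp h6).2.1
              omega
            exact hend ⟨haA, by omega⟩
          · -- b ∉ S : crossing
            obtain ⟨p', hp'S, hp'b, hzp', hp'max⟩ := pred_spec hzS (by omega : z < b)
            have hbB' : b < B := by
              rcases Nat.eq_or_lt_of_le hbB with h | h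
              · exact absurd (h ▸ hB) hbS
              · exact h
            obtain ⟨q', hq'S, hbq', hq'B, hq'min⟩ := succ_spec hB hbB'
            have hmidb : ∀ w ∈ S, ¬(p' < w ∧ w < q') := by
              rintro w hwS ⟨hw1, hw2⟩
              rcases lt_trichotomy w b with h | h | h
              · exact absurd (hp'max w hwS h) (by omega)
              · exact hbS (h ▸ hwS)
              · exact absurd (hq'min w hwS h) (by omega)
            exact (edge_diag_ncr 𝒯 h2 hS (consec_edge ⟨hp'S, hq'S, by omega, hmidb⟩) hd).2
              ⟨by dsimp; omega, by dsimp; omega, by dsimp; omega⟩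
        · -- a ∉ S : crossing
          have hAa' : A < a := by
            rcases Nat.eq_or_lt_of_le hAa with h | h
            · exact absurd (h ▸ hA) haS
            · exact h
          obtain ⟨p, hpS, hpa, hAp, hpmax⟩ := pred_spec hA hAa'
          obtain ⟨q, hqS, haq, hqz, hqmin⟩ := succ_spec hzS (by omega : a < z)
          have hmida : ∀ w ∈ S, ¬(p < w ∧ w < q) := by
            rintro w hwS ⟨hw1, hw2⟩
            rcases lt_trichotomy w a with h | h | h
            · exact absurd (hpmax w hwS h) (by omega)
            · exact haS (h ▸ hwS)
            · exact absurd (hqmin w hwS h) (by omega)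
          exact (edge_diag_ncr 𝒯 h2 hS (consec_edge ⟨hpS, hqS, by omega, hmida⟩) hd).1
            ⟨by dsimp; omega, by dsimp; omega, by dsimp; omega⟩
      have hcons : Consec S u v := ⟨huS, hvS, by omega, hmid⟩
      have hbf := step ht 𝒯 h2 hS hA hB hb hcons (by omega)
      have hnend : ¬(u = A ∧ v = B) := by
        rintro ⟨rfl, rfl⟩
        exact consec_not_ends ht hS hb hcons
      have hor : A < u ∨ v < B := by
        rcases Nat.eq_or_lt_of_le hAu with h | h
        · rcases Nat.eq_or_lt_of_le hvB with h' | h'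
          · exact absurd ⟨h.symm, h'⟩ hnend
          · exact Or.inr h'
        · exact Or.inl h
      exact ih u v (by omega) hbf a b hd hua' hbv' hdiv

end Stmt11
namespace Stmt11

lemma fd0 {t n : ℕ} (ht : 3 ≤ t) (𝒯 : Triangulation n) {Ta Tb : Tiling t n}
    (h1 : SubTri Ta 𝒯) (h2 : SubTri Tb 𝒯) {X Y : Finset ℕ}
    (hX : X ∈ Ta.faces) (hY : Y ∈ Tb.faces) {m M : ℕ}
    (hmX : m ∈ X) (hMX : M ∈ X) (hmY : m ∈ Y) (hMY : M ∈ Y)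
    (hbX : ∀ z ∈ X, m ≤ z ∧ z ≤ M) (hbY : ∀ z ∈ Y, m ≤ z ∧ z ≤ M)
    {c : ℕ} (hcX : c ∈ X) (hcY : c ∉ Y)
    (hminX : ∀ z ∈ X, z ∉ Y → c ≤ z) (hminY : ∀ z ∈ Y, z ∉ X → c ≤ z) : False := by
  have hmc : m < c := by
    rcases Nat.eq_or_lt_of_le (hbX c hcX).1 with h | h
    · exact absurd (h ▸ hmY) hcY
    · exact h
  obtain ⟨u, huX, huc, hmu, humax⟩ := pred_spec hmX hmc
  have hconsX : Consec X u c :=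
    ⟨huX, hcX, huc, fun z hz hzz => absurd (humax z hz hzz.2) (by omega)⟩
  have huY : u ∈ Y := by
    by_contra huY
    exact absurd (hminX u huX huY) (by omega)
  have hcM : c ≤ M := (hbX c hcX).2
  have hcMne : c ≠ M := fun h => hcY (h ▸ hMY)
  obtain ⟨v', hv'Y, huv', hv'M, hv'min⟩ := succ_spec hMY (by omega : u < M)
  have hconsY : Consec Y u v' :=
    ⟨huY, hv'Y, huv', fun z hz hzz => absurd (hv'min z hz hzz.1) (by omega)⟩
  have hcv' : c < v' := by
    rcases lt_trichotomy v' c with h | h | h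
    · by_cases hv'X : v' ∈ X
      · exact absurd (humax v' hv'X h) (by omega)
      · exact absurd (hminY v' hv'Y hv'X) (by omega)
    · exact absurd (h ▸ hv'Y) hcY
    · exact h
  have hv'X : v' ∈ X := by
    rcases Nat.eq_or_lt_of_le hv'M with h | hv'ltM
    · rw [h]; exact hMX
    · by_contra hv'X
      obtain ⟨p, hpX, hpv', hcp, hpmax⟩ := pred_spec hcX hcv'
      obtain ⟨q, hqX, hv'q, hqM, hqmin⟩ := succ_spec hMX hv'ltM
      have hmidpq : ∀ z ∈ X, ¬(p < z ∧ z < q) := by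
        rintro z hz ⟨h1z, h2z⟩
        rcases lt_trichotomy z v' with h' | h' | h'
        · exact absurd (hpmax z hz h') (by omega)
        · exact hv'X (h' ▸ hz)
        · exact absurd (hqmin z hz h') (by omega)
      exact edges_ncr 𝒯 h2 h1 hY hX (consec_edge hconsY)
        (consec_edge ⟨hpX, hqX, by omega, hmidpq⟩)
        ⟨by dsimp; omega, by dsimp; omega, by dsimp; omega⟩
  set inner := X.filter (fun z => u < z ∧ z < v') with hinner
  have hk1 : 1 ≤ inner.card :=
    Finset.card_pos.mpr ⟨c, Finset.mem_filter.mpr ⟨hcX, by omega, hcv'⟩⟩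
  have H : ∀ p q, p ∈ X → q ∈ X → p < q → (∀ z ∈ X, ¬(p < z ∧ z < q)) →
      ((t:ℤ) - 2) ∣ ((q:ℤ) - p - 1) :=
    fun p q hp hq hpq hm => edgediv ht 𝒯 h1 hX (consec_edge ⟨hp, hq, hpq, hm⟩)
  have hgw := gapwalk X u huX H v' hv'X (by omega)
  have hfilter : X.filter (fun z => u < z ∧ z ≤ v') = insert v' inner := by
    ext z
    simp only [hinner, Finset.mem_filter, Finset.mem_insert]
    constructor
    · rintro ⟨hz, h1z, h2z⟩
      rcases Nat.eq_or_lt_of_le h2z with rfl | h3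
      · exact Or.inl rfl
      · exact Or.inr ⟨hz, h1z, h3⟩
    · rintro (rfl | ⟨hz, h1z, h2z⟩)
      · exact ⟨hv'X, by omega, le_rfl⟩
      · exact ⟨hz, h1z, by omega⟩
  rw [hfilter, Finset.card_insert_of_notMem (by
    simp only [hinner, Finset.mem_filter, not_and]
    intro _ _
    omega)] at hgw
  have hd1 := edgediv ht 𝒯 h2 hY (consec_edge hconsY)
  have hdk : ((t:ℤ) - 2) ∣ (inner.card : ℤ) := by
    have h3 : (inner.card : ℤ) =
        ((v':ℤ) - u - 1) - ((v':ℤ) - u - ((inner.card : ℤ) + 1)) := by ring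
    rw [h3]
    refine dvd_sub hd1 ?_
    have h4 := hgw
    push_cast at h4 ⊢
    convert h4 using 2
  have hkt := Int.le_of_dvd (by exact_mod_cast hk1) hdk
  have hkt' : t ≤ inner.card + 2 := by
    have h3 : (3:ℤ) ≤ (t:ℤ) := by exact_mod_cast ht
    omega
  have hXcard := Ta.size X hX
  have hum : u = m := by
    by_contra hum
    have hmu' : m < u := by omega
    have hsub : insert m (insert u (insert v' inner)) ⊆ X := by
      intro z hz
      rcases Finset.mem_insert.mp hz with rfl | hz
      · exact hmX
      rcases Finset.mem_insert.mp hz with rfl | hz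
      · exact huX
      rcases Finset.mem_insert.mp hz with rfl | hz
      · exact hv'X
      exact Finset.filter_subset _ _ hz
    have hcard : (insert m (insert u (insert v' inner))).card = inner.card + 3 := by
      rw [Finset.card_insert_of_notMem, Finset.card_insert_of_notMem,
        Finset.card_insert_of_notMem]
      · simp only [hinner, Finset.mem_filter, not_and]
        intro _ _
        omega
      · intro h
        rcases Finset.mem_insert.mp h with h' | h'
        · omega
        · have := (Finset.mem_filter.mp h').2
          omega
      · intro h
        rcases Finset.mem_insert.mp h with h' | h'
        · omega
        rcases Finset.mem_insert.mp h' with h'' | h''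
        · omega
        · have := (Finset.mem_filter.mp h'').2
          omega
    have := Finset.card_le_card hsub
    omega
  have hv'M' : v' = M := by
    by_contra hvm
    have hv'ltM : v' < M := by omega
    have hsub : insert m (insert M (insert v' inner)) ⊆ X := by
      intro z hz
      rcases Finset.mem_insert.mp hz with rfl | hz
      · exact hmX
      rcases Finset.mem_insert.mp hz with rfl | hz
      · exact hMX
      rcases Finset.mem_insert.mp hz with rfl | hz
      · exact hv'X
      exact Finset.filter_subset _ _ hz
    have hcard : (insert m (insert M (insert v' inner))).card = inner.card + 3 := by
      rw [Finset.card_insert_of_notMem, Finset.card_insert_of_notMem,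
        Finset.card_insert_of_notMem]
      · simp only [hinner, Finset.mem_filter, not_and]
        intro _ _
        omega
      · intro h
        rcases Finset.mem_insert.mp h with h' | h'
        · omega
        · have := (Finset.mem_filter.mp h').2
          omega
      · intro h
        rcases Finset.mem_insert.mp h with h' | h'
        · omega
        rcases Finset.mem_insert.mp h' with h'' | h''
        · omega
        · have := (Finset.mem_filter.mp h'').2
          omega
    have := Finset.card_le_card hsub
    omega
  have hYsub : Y ⊆ ({m, M} : Finset ℕ) := by
    intro z hz
    have h1z := hbY z hz
    have h2z := hconsY.2.2.2 z hz
    rw [hum, hv'M'] at h2z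
    simp only [Finset.mem_insert, Finset.mem_singleton]
    omega
  have hYc := Finset.card_le_card hYsub
  have h4 : ({m, M} : Finset ℕ).card ≤ 2 :=
    le_trans (Finset.card_insert_le _ _) (by simp)
  have := Tb.size Y hY
  omega

lemma fd {t n : ℕ} (ht : 3 ≤ t) (𝒯 : Triangulation n) {Ta Tb : Tiling t n}
    (h1 : SubTri Ta 𝒯) (h2 : SubTri Tb 𝒯) {X Y : Finset ℕ}
    (hX : X ∈ Ta.faces) (hY : Y ∈ Tb.faces) {m M : ℕ}
    (hmX : m ∈ X) (hMX : M ∈ X) (hmY : m ∈ Y) (hMY : M ∈ Y)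
    (hbX : ∀ z ∈ X, m ≤ z ∧ z ≤ M) (hbY : ∀ z ∈ Y, m ≤ z ∧ z ≤ M) : X = Y := by
  by_contra hne
  have hΔ : ((X \ Y) ∪ (Y \ X)).Nonempty := by
    rw [Finset.nonempty_iff_ne_empty]
    intro h
    obtain ⟨hXY, hYX⟩ := Finset.union_eq_empty.mp h
    exact hne (Finset.Subset.antisymm
      (by rwa [← Finset.sdiff_eq_empty_iff_subset])
      (by rwa [← Finset.sdiff_eq_empty_iff_subset]))
  have hcmem := Finset.min'_mem _ hΔ
  have hcmin : ∀ z ∈ (X \ Y) ∪ (Y \ X), ((X \ Y) ∪ (Y \ X)).min' hΔ ≤ z :=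
    fun z hz => Finset.min'_le _ z hz
  have hminX : ∀ z ∈ X, z ∉ Y → ((X \ Y) ∪ (Y \ X)).min' hΔ ≤ z :=
    fun z hz hz' => hcmin z (Finset.mem_union_left _ (Finset.mem_sdiff.mpr ⟨hz, hz'⟩))
  have hminY : ∀ z ∈ Y, z ∉ X → ((X \ Y) ∪ (Y \ X)).min' hΔ ≤ z :=
    fun z hz hz' => hcmin z (Finset.mem_union_right _ (Finset.mem_sdiff.mpr ⟨hz, hz'⟩))
  rcases Finset.mem_union.mp hcmem with hc | hc
  · obtain ⟨hcX, hcY⟩ := Finset.mem_sdiff.mp hc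
    exact fd0 ht 𝒯 h1 h2 hX hY hmX hMX hmY hMY hbX hbY hcX hcY hminX hminY
  · obtain ⟨hcY, hcX⟩ := Finset.mem_sdiff.mp hc
    exact fd0 ht 𝒯 h2 h1 hY hX hmY hMY hmX hMX hbY hbX hcY hcX hminY hminX

lemma incl {t n : ℕ} (ht : 3 ≤ t) (𝒯 : Triangulation n) {Ta Tb : Tiling t n}
    (h1 : SubTri Ta 𝒯) (h2 : SubTri Tb 𝒯) : Ta.faces ⊆ Tb.faces := by
  intro S hS
  have hne : S.Nonempty := by
    have := Ta.size S hS
    rw [← Finset.card_pos, this]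
    omega
  have hmS : S.min' hne ∈ S := Finset.min'_mem _ _
  have hMS : S.max' hne ∈ S := Finset.max'_mem _ _
  set m := S.min' hne with hmdef
  set M := S.max' hne with hMdef
  have hbS : ∀ z ∈ S, m ≤ z ∧ z ≤ M :=
    fun z hz => ⟨Finset.min'_le _ _ hz, Finset.le_max' _ _ hz⟩
  have hspan : m + 2 ≤ M := face_span ht hS hbS
  have hbf : ∃ P ∈ Tb.faces, m ∈ P ∧ M ∈ P ∧ ∀ z ∈ P, m ≤ z ∧ z ≤ M := by
    by_cases hh : (m, M) ∈ hullEdges n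
    · rcases mem_hullEdges.mp hh with ⟨i, hi, hpair⟩ | hpair
      · have e1 : m = i := congrArg Prod.fst hpair
        have e2 : M = i + 1 := congrArg Prod.snd hpair
        omega
      · have e1 : m = 0 := congrArg Prod.fst hpair
        have e2 : M = n + 1 := congrArg Prod.snd hpair
        rw [e1, e2]
        exact root Tb
    · have hlong : (m, M) ∈ faceEdges S := long_edge hmS hMS (by omega) hbS
      have hdg : (m, M) ∈ 𝒯.diag := h1 S hS (m, M) hlong hh
      have hdiv := edgediv ht 𝒯 h1 hS hlong
      exact find ht 𝒯 h2 (n + 1) 0 (n + 1) (by omega) (root Tb) m M hdg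
        (Nat.zero_le _) (face_le hS hMS) hdiv
  obtain ⟨P, hPf, hmP, hMP, hbP⟩ := hbf
  have hSP : S = P := fd ht 𝒯 h1 h2 hS hPf hmS hMS hmP hMP hbS hbP
  rw [hSP]
  exact hPf

end Stmt11

/-- Any triangulation of a convex polygon on `n+2` points contains at most one
`t`-gonal tiling as a subgraph. -/
theorem stmt11 (t n : ℕ) (ht : 3 ≤ t) (𝒯 : Triangulation n)
    (T1 T2 : Tiling t n) (h1 : SubTri T1 𝒯) (h2 : SubTri T2 𝒯) : T1 = T2 := by
  have hfe : T1.faces = T2.faces :=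
    Finset.Subset.antisymm (Stmt11.incl ht 𝒯 h1 h2) (Stmt11.incl ht 𝒯 h2 h1)
  cases T1
  cases T2
  have hfe' : _ = _ := hfe
  subst hfe'
  rfl
end

section
/- Let M be a non-crossing perfect matching on 2n bitonically k-colored vertices with valid block structure that is not monochromatic. Then M contains a bichromatic edge v_s v_e (s < e) such that: (i) v_s and v_e lie in different blocks S and E; (ii) no bichromatic matching edge has both endpoints strictly between v_s and v_e; (iii) the number of blocks strictly between S and E is odd; and (iv) if v_s is the i-th vertex of S then v_e is the (i+1)-st vertex of E. -/
set_option linter.all false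


namespace NCMatching
variable {n : ℕ} (M : NCMatching n)

lemma unique_pair {q q' : ℕ × ℕ} (hq : q ∈ M.pairs) (hq' : q' ∈ M.pairs) {v : ℕ}
    (h1 : q.1 = v ∨ q.2 = v) (h2 : q'.1 = v ∨ q'.2 = v) : q = q' := by
  have hv : v < 2 * n := by
    have h3 := M.mem_lt q hq
    rcases h1 with h | h <;> omega
  obtain ⟨p, _, hu⟩ := M.covers v hv
  rw [hu q ⟨hq, h1⟩, hu q' ⟨hq', h2⟩]

lemma out_fst {q : ℕ × ℕ} (hq : q ∈ M.pairs) : M.out q.1 = 1 := by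
  have h : M.pairs.filter (fun p => p.1 = q.1) = {q} := by
    apply Finset.eq_singleton_iff_unique_mem.mpr
    refine ⟨Finset.mem_filter.mpr ⟨hq, rfl⟩, ?_⟩
    intro r hr
    rw [Finset.mem_filter] at hr
    exact M.unique_pair hr.1 hq (Or.inl hr.2) (Or.inl rfl)
  rw [NCMatching.out, h, Finset.card_singleton]

lemma out_snd {q : ℕ × ℕ} (hq : q ∈ M.pairs) : M.out q.2 = 0 := by
  rw [NCMatching.out, Finset.card_eq_zero, Finset.filter_eq_empty_iff]
  intro r hr h
  have he := M.unique_pair hr hq (Or.inl h) (Or.inr rfl)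
  have hlt := M.mem_lt r hr
  rw [he] at hlt h
  omega

lemma interior {p q : ℕ × ℕ} (hp : p ∈ M.pairs) (hq : q ∈ M.pairs)
    (h : (p.1 < q.1 ∧ q.1 < p.2) ∨ (p.1 < q.2 ∧ q.2 < p.2)) :
    p.1 < q.1 ∧ q.2 < p.2 := by
  have hq12 := (M.mem_lt q hq).1
  have hp12 := (M.mem_lt p hp).1
  have hne : p ≠ q := by
    rintro rfl
    rcases h with ⟨h1, h2⟩ | ⟨h1, h2⟩ <;> omega
  have e11 : q.1 ≠ p.1 := fun h' => hne (M.unique_pair hp hq (Or.inl rfl) (Or.inl h'))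
  have e12 : q.1 ≠ p.2 := fun h' => hne (M.unique_pair hp hq (Or.inr rfl) (Or.inl h'))
  have e21 : q.2 ≠ p.1 := fun h' => hne (M.unique_pair hp hq (Or.inl rfl) (Or.inr h'))
  have e22 : q.2 ≠ p.2 := fun h' => hne (M.unique_pair hp hq (Or.inr rfl) (Or.inr h'))
  have nc1 := M.noncross p hp q hq
  have nc2 := M.noncross q hq p hp
  omega

end NCMatching

lemma succ_divmod (k m : ℕ) (hk : 0 < k) :
    ((m + 1) / k = m / k ∧ (m + 1) % k = m % k + 1 ∧ m % k + 1 < k) ∨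
    ((m + 1) / k = m / k + 1 ∧ (m + 1) % k = 0 ∧ m % k + 1 = k) := by
  have hmk := Nat.div_add_mod m k
  have hmk2 : m / k * k = k * (m / k) := Nat.mul_comm _ _
  have hml : m % k < k := Nat.mod_lt m hk
  rcases Nat.lt_or_ge (m % k + 1) k with h | h
  · left
    have h1 : m + 1 = (m % k + 1) + (m / k) * k := by omega
    refine ⟨?_, ?_, h⟩
    · rw [h1, Nat.add_mul_div_right _ _ hk, Nat.div_eq_of_lt h, Nat.zero_add]
    · rw [h1, Nat.add_mul_mod_self_right, Nat.mod_eq_of_lt h]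
  · right
    have hke : m % k + 1 = k := by omega
    have h1 : m + 1 = (m / k + 1) * k := by
      rw [Nat.add_mul, Nat.one_mul]; omega
    refine ⟨?_, ?_, hke⟩
    · rw [h1, Nat.mul_div_cancel _ hk]
    · rw [h1, Nat.mul_mod_left]

def chi (k b j c : ℕ) : ℕ :=
  if b % 2 = 0 then (if c < j then 1 else 0) else (if k ≤ c + j then 1 else 0)

lemma bitCount (k : ℕ) (hk : 0 < k) (c : ℕ) (hc : c < k) (m : ℕ) :
    ((Finset.range m).filter fun v => bitColor k v = c).card
      = m / k + chi k (m / k) (m % k) c := by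
  induction m with
  | zero => simp [chi]
  | succ m ih =>
    have hnm : m ∉ (Finset.range m).filter (fun v => bitColor k v = c) := by simp
    have hml : m % k < k := Nat.mod_lt m hk
    rw [Finset.range_add_one, Finset.filter_insert]
    rcases succ_divmod k m hk with ⟨h1, h2, h3⟩ | ⟨h1, h2, h3⟩ <;>
      rw [h1, h2] <;>
      by_cases hb : bitColor k m = c
    · rw [if_pos hb, Finset.card_insert_of_notMem hnm, ih]
      simp only [bitColor] at hb
      unfold chi
      split_ifs at hb ⊢ <;> omega
    · rw [if_neg hb, ih]
      simp only [bitColor] at hb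
      unfold chi
      split_ifs at hb ⊢ <;> omega
    · rw [if_pos hb, Finset.card_insert_of_notMem hnm, ih]
      simp only [bitColor] at hb
      unfold chi
      split_ifs at hb ⊢ <;> omega
    · rw [if_neg hb, ih]
      simp only [bitColor] at hb
      unfold chi
      split_ifs at hb ⊢ <;> omega

lemma endgame (k a b i j a' i' : ℕ) (hk : 2 ≤ k) (hi : i < k) (hj : j < k) (hab : a < b)
    (hsd : (a' = a ∧ i' = i + 1 ∧ i + 1 < k) ∨ (a' = a + 1 ∧ i' = 0 ∧ i + 1 = k))
    (hcol : (a % 2 = 0 → b % 2 = 0 → i ≠ j) ∧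
      (a % 2 = 0 → b % 2 ≠ 0 → i ≠ k - 1 - j) ∧
      (a % 2 ≠ 0 → b % 2 = 0 → k - 1 - i ≠ j) ∧
      (a % 2 ≠ 0 → b % 2 ≠ 0 → k - 1 - i ≠ k - 1 - j))
    (H : ∀ c, c < k → (b + chi k b j c) % 2 = (a' + chi k a' i' c) % 2) :
    j = i + 1 ∧ (b - a - 1) % 2 = 1 := by
  obtain ⟨hc1, hc2, hc3, hc4⟩ := hcol
  rcases Nat.mod_two_eq_zero_or_one a with hpa | hpa <;>
    rcases Nat.mod_two_eq_zero_or_one b with hpb | hpb <;>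
    rcases hsd with ⟨ha', hi', hik⟩ | ⟨ha', hi', hik⟩ <;>
    subst ha' <;> subst hi'
  · have I1 := H i hi
    have I2 := H (i + 1) hik
    simp only [chi, hpa, hpb] at I1 I2
    norm_num at I1 I2
    split_ifs at I1 I2 <;> omega
  · have hpa' : (a + 1) % 2 = 1 := by omega
    have I1 := H (k - 1) (by omega)
    simp only [chi, hpa', hpb] at I1
    norm_num at I1
    split_ifs at I1 <;> omega
  · have I1 := H i hi
    have I2 := H (k - 1 - j) (by omega)
    simp only [chi, hpa, hpb] at I1 I2
    norm_num at I1 I2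
    split_ifs at I1 I2 <;> omega
  · have hpa' : (a + 1) % 2 = 1 := by omega
    have I1 := H (k - 1) (by omega)
    simp only [chi, hpa', hpb] at I1
    norm_num at I1
    split_ifs at I1 <;> omega
  · have I1 := H j hj
    have I2 := H (k - 1 - i) (by omega)
    simp only [chi, hpa, hpb] at I1 I2
    norm_num at I1 I2
    split_ifs at I1 I2 <;> omega
  · have hpa' : (a + 1) % 2 = 0 := by omega
    have I1 := H 0 (by omega)
    simp only [chi, hpa', hpb] at I1
    norm_num at I1
    split_ifs at I1 <;> omega
  · have I1 := H (k - 1 - i) (by omega)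
    simp only [chi, hpa, hpb] at I1
    norm_num at I1
    have hj1 : i + 1 ≤ j := by split_ifs at I1 <;> omega
    have I2 := H (k - j) (by omega)
    simp only [chi, hpa, hpb] at I2
    norm_num at I2
    split_ifs at I2 <;> omega
  · have hpa' : (a + 1) % 2 = 0 := by omega
    have I1 := H 0 (by omega)
    simp only [chi, hpa', hpb] at I1
    norm_num at I1
    split_ifs at I1 <;> omega


set_option maxHeartbeats 1000000 in
/-- A non-monochromatic matching with valid block structure contains a
bichromatic edge `v_s v_e` satisfying properties (i)-(iv). -/
theorem stmt13 (k n : ℕ) (hk : 2 ≤ k) (hdvd : k ∣ n) (M : NCMatching n)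
    (hvb : ValidBlock k M) (hnm : ¬ Mono k M) :
    ∃ p ∈ M.pairs,
      bitColor k p.1 ≠ bitColor k p.2 ∧
      p.1 / k ≠ p.2 / k ∧
      (∀ q ∈ M.pairs, p.1 < q.1 → q.2 < p.2 → bitColor k q.1 = bitColor k q.2) ∧
      Odd (p.2 / k - p.1 / k - 1) ∧
      p.2 % k = p.1 % k + 1  := by
  classical
  have hk0 : 0 < k := by omega
  have hBne : (M.pairs.filter fun q => bitColor k q.1 ≠ bitColor k q.2).Nonempty := by
    rw [Finset.filter_nonempty_iff]
    by_contra h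
    push_neg at h
    exact hnm h
  obtain ⟨p, hpB, hmin⟩ := Finset.exists_min_image _ (fun q => q.2 - q.1) hBne
  obtain ⟨hp, hbi⟩ := Finset.mem_filter.mp hpB
  obtain ⟨s, e⟩ := p
  have hse : s < e := ((M.mem_lt _ hp).1 : s < e)
  have he2n : e < 2 * n := ((M.mem_lt _ hp).2 : e < 2 * n)
  have hbi' : bitColor k s ≠ bitColor k e := hbi
  have hmono : ∀ q ∈ M.pairs, s < q.1 → q.2 < e → bitColor k q.1 = bitColor k q.2 := by
    intro q hq h1 h2
    by_contra hne
    have hq12 := (M.mem_lt q hq).1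
    have hm : e - s ≤ q.2 - q.1 := hmin q (Finset.mem_filter.mpr ⟨hq, hne⟩)
    omega
  have hout_s : M.out s = 1 := M.out_fst hp
  have hout_e : M.out e = 0 := M.out_snd hp
  have hblk : s / k ≠ e / k := by
    intro h
    have := hvb s e he2n h hse hout_s
    omega
  have heven : ∀ c, ∃ t, ((Finset.Ioo s e).filter fun v => bitColor k v = c).card = 2 * t := by
    intro c
    set Pc := M.pairs.filter (fun q => s < q.1 ∧ q.2 < e ∧ bitColor k q.1 = c) with hPc
    have hPcsub : ∀ q ∈ Pc, q ∈ M.pairs ∧ s < q.1 ∧ q.2 < e ∧ bitColor k q.1 = c := by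
      intro q hq
      have := Finset.mem_filter.mp hq
      tauto
    have himg : (Finset.Ioo s e).filter (fun v => bitColor k v = c)
        = Pc.image Prod.fst ∪ Pc.image Prod.snd := by
      ext v
      simp only [Finset.mem_filter, Finset.mem_Ioo, Finset.mem_union, Finset.mem_image]
      constructor
      · rintro ⟨⟨hsv, hve⟩, hcol⟩
        obtain ⟨q, ⟨hq, hqv⟩, -⟩ := M.covers v (by omega)
        have hq12 := (M.mem_lt q hq).1
        rcases hqv with h1 | h2
        · have hint := M.interior hp hq (Or.inl ⟨show s < q.1 by omega, show q.1 < e by omega⟩)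
          have hint1 : s < q.1 := hint.1
          have hint2 : q.2 < e := hint.2
          exact Or.inl ⟨q, Finset.mem_filter.mpr ⟨hq, hint1, hint2, by rw [h1]; exact hcol⟩, h1⟩
        · have hint := M.interior hp hq (Or.inr ⟨show s < q.2 by omega, show q.2 < e by omega⟩)
          have hint1 : s < q.1 := hint.1
          have hint2 : q.2 < e := hint.2
          have hcq := hmono q hq hint1 hint2
          exact Or.inr ⟨q, Finset.mem_filter.mpr ⟨hq, hint1, hint2, by rw [hcq, h2]; exact hcol⟩, h2⟩
      · rintro (⟨q, hq, rfl⟩ | ⟨q, hq, rfl⟩)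
        · obtain ⟨hq', h1, h2, h3⟩ := hPcsub q hq
          have hq12 := (M.mem_lt q hq').1
          exact ⟨⟨h1, by omega⟩, h3⟩
        · obtain ⟨hq', h1, h2, h3⟩ := hPcsub q hq
          have hq12 := (M.mem_lt q hq').1
          have hcq := hmono q hq' h1 h2
          exact ⟨⟨by omega, h2⟩, by rw [← hcq]; exact h3⟩
    have hinj1 : Set.InjOn Prod.fst (Pc : Set (ℕ × ℕ)) := by
      intro q hq q' hq' h
      exact M.unique_pair (hPcsub q (Finset.mem_coe.mp hq)).1 (hPcsub q' (Finset.mem_coe.mp hq')).1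
        (Or.inl rfl) (Or.inl h.symm)
    have hinj2 : Set.InjOn Prod.snd (Pc : Set (ℕ × ℕ)) := by
      intro q hq q' hq' h
      exact M.unique_pair (hPcsub q (Finset.mem_coe.mp hq)).1 (hPcsub q' (Finset.mem_coe.mp hq')).1
        (Or.inr rfl) (Or.inr h.symm)
    have hdisj : Disjoint (Pc.image Prod.fst) (Pc.image Prod.snd) := by
      rw [Finset.disjoint_left]
      rintro a hmem1 hmem2
      obtain ⟨q, hq, hqe⟩ := Finset.mem_image.mp hmem1
      obtain ⟨q', hq', hq'e⟩ := Finset.mem_image.mp hmem2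
      have h1 := (hPcsub q hq).1
      have h2 := (hPcsub q' hq').1
      have heq := M.unique_pair h1 h2 (Or.inl (hqe.trans hq'e.symm)) (Or.inr rfl)
      have hlt := (M.mem_lt q h1).1
      rw [heq] at hqe hlt
      omega
    refine ⟨Pc.card, ?_⟩
    rw [himg, Finset.card_union_of_disjoint hdisj, Finset.card_image_of_injOn hinj1,
      Finset.card_image_of_injOn hinj2]
    omega
  have hcount : ∀ c, c < k →
      (e / k + chi k (e / k) (e % k) c) % 2
        = ((s + 1) / k + chi k ((s + 1) / k) ((s + 1) % k) c) % 2 := by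
    intro c hc
    have h1 := bitCount k hk0 c hc e
    have h2 := bitCount k hk0 c hc (s + 1)
    obtain ⟨t, ht⟩ := heven c
    have hsplit : ((Finset.range (s + 1)).filter fun v => bitColor k v = c).card
        + ((Finset.Ioo s e).filter fun v => bitColor k v = c).card
        = ((Finset.range e).filter fun v => bitColor k v = c).card := by
      have hU : Finset.range e = Finset.range (s + 1) ∪ Finset.Ioo s e := by
        ext x
        simp only [Finset.mem_union, Finset.mem_range, Finset.mem_Ioo]
        omega
      have hD : Disjoint (Finset.range (s + 1)) (Finset.Ioo s e) := by
        rw [Finset.disjoint_left]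
        intro x h1 h2
        simp only [Finset.mem_range] at h1
        simp only [Finset.mem_Ioo] at h2
        omega
      rw [hU, Finset.filter_union,
        Finset.card_union_of_disjoint (Finset.disjoint_filter_filter hD)]
    omega
  have hmls : s % k < k := Nat.mod_lt _ hk0
  have hmle : e % k < k := Nat.mod_lt _ hk0
  have hdle : s / k ≤ e / k := Nat.div_le_div_right (by omega)
  have hab : s / k < e / k := by omega
  have hsd := succ_divmod k s hk0
  have hbi2 : (if (s / k) % 2 = 0 then s % k else k - 1 - s % k)
      ≠ (if (e / k) % 2 = 0 then e % k else k - 1 - e % k) := hbi'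
  have hcol : ((s / k) % 2 = 0 → (e / k) % 2 = 0 → s % k ≠ e % k) ∧
      ((s / k) % 2 = 0 → (e / k) % 2 ≠ 0 → s % k ≠ k - 1 - e % k) ∧
      ((s / k) % 2 ≠ 0 → (e / k) % 2 = 0 → k - 1 - s % k ≠ e % k) ∧
      ((s / k) % 2 ≠ 0 → (e / k) % 2 ≠ 0 → k - 1 - s % k ≠ k - 1 - e % k) := by
    split_ifs at hbi2 <;> refine ⟨?_, ?_, ?_, ?_⟩ <;> intros <;> omega
  have hmain := endgame k (s / k) (e / k) (s % k) (e % k) ((s + 1) / k) ((s + 1) % k)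
    hk hmls hmle hab hsd hcol hcount
  refine ⟨(s, e), hp, hbi, hblk, hmono, ?_, ?_⟩
  · show Odd (e / k - s / k - 1)
    rw [Nat.odd_iff]
    exact hmain.2
  · exact hmain.1
end

section
/- A non-crossing perfect matching on 2n bitonically k-colored vertices is a perfect k-colored (monochromatic) matching if and only if it has valid block structure and contains no bichromatic edge; equivalently, valid block structure together with absence of a shortest bichromatic edge satisfying properties (i)-(iv) of the previous lemma characterizes k-colored matchings. -/
section Aux

variable {n : ℕ} (M : NCMatching n)

lemma pair_eq_of_mem {p q : ℕ × ℕ} (hp : p ∈ M.pairs) (hq : q ∈ M.pairs)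
    (v : ℕ) (hv : p.1 = v ∨ p.2 = v) (hv' : q.1 = v ∨ q.2 = v) : p = q := by
  have h1 := M.mem_lt p hp
  have hvn : v < 2 * n := by rcases hv with h | h <;> omega
  obtain ⟨r, _, hu⟩ := M.covers v hvn
  rw [hu p ⟨hp, hv⟩, hu q ⟨hq, hv'⟩]

lemma out_fst_eq_one {p : ℕ × ℕ} (hp : p ∈ M.pairs) : M.out p.1 = 1 := by
  have h : M.pairs.filter (fun q => q.1 = p.1) = {p} := by
    ext q
    simp only [Finset.mem_filter, Finset.mem_singleton]
    constructor
    · rintro ⟨hq, h⟩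
      exact pair_eq_of_mem M hq hp p.1 (Or.inl h) (Or.inl rfl)
    · rintro rfl; exact ⟨hp, rfl⟩
  simp [NCMatching.out, h]

lemma out_snd_eq_zero {p : ℕ × ℕ} (hp : p ∈ M.pairs) : M.out p.2 = 0 := by
  have h : M.pairs.filter (fun q => q.1 = p.2) = ∅ := by
    ext q
    simp only [Finset.mem_filter, Finset.notMem_empty, iff_false, not_and]
    intro hq hq1
    have heq := pair_eq_of_mem M hq hp p.2 (Or.inl hq1) (Or.inr rfl)
    rw [heq] at hq1
    have := M.mem_lt p hp
    omega
  simp [NCMatching.out, h]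

lemma snd_lt_of_fst_mem {a b : ℕ} (hab : (a, b) ∈ M.pairs)
    {q : ℕ × ℕ} (hq : q ∈ M.pairs) (h1 : a < q.1) (h2 : q.1 < b) : q.2 < b := by
  have hq2 := (M.mem_lt q hq).1
  by_contra h
  rcases Nat.lt_or_ge b q.2 with hlt | hge
  · exact M.noncross (a, b) hab q hq ⟨h1, h2, hlt⟩
  · have hb : q.2 = b := by omega
    have heq := pair_eq_of_mem M hq hab b (Or.inr hb) (Or.inr rfl)
    rw [heq] at h1
    simp at h1

lemma fst_gt_of_snd_mem {a b : ℕ} (hab : (a, b) ∈ M.pairs)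
    {q : ℕ × ℕ} (hq : q ∈ M.pairs) (h1 : a < q.2) (h2 : q.2 < b) : a < q.1 := by
  by_contra h
  rcases Nat.lt_or_ge q.1 a with hlt | hge
  · exact M.noncross q hq (a, b) hab ⟨hlt, h1, h2⟩
  · have ha : q.1 = a := by omega
    have heq := pair_eq_of_mem M hq hab a (Or.inl ha) (Or.inl rfl)
    rw [heq] at h2
    simp at h2

lemma bitColor_lt (k : ℕ) (hk : 0 < k) (i : ℕ) : bitColor k i < k := by
  have := Nat.mod_lt i hk
  unfold bitColor
  split <;> omega

lemma bitColor_block (k : ℕ) (hk : 0 < k) (j i : ℕ) (hi : i < k) :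
    bitColor k (j * k + i) = if j % 2 = 0 then i else k - 1 - i := by
  have hdiv : (j * k + i) / k = j := by
    rw [mul_comm, Nat.mul_add_div hk, Nat.div_eq_of_lt hi, add_zero]
  have hmod : (j * k + i) % k = i := by
    rw [mul_comm, Nat.mul_add_mod, Nat.mod_eq_of_lt hi]
  unfold bitColor
  rw [hdiv, hmod]

lemma bitColor_ne_of_same_block (k : ℕ) (hk : 0 < k) {u v : ℕ}
    (hblock : u / k = v / k) (hne : u ≠ v) : bitColor k u ≠ bitColor k v := by
  have hu : k * (v / k) + u % k = u := by rw [← hblock]; exact Nat.div_add_mod u k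
  have hv : k * (v / k) + v % k = v := Nat.div_add_mod v k
  have hum := Nat.mod_lt u hk
  have hvm := Nat.mod_lt v hk
  have hmodne : u % k ≠ v % k := by intro h; apply hne; omega
  unfold bitColor
  rw [hblock]
  by_cases h2 : (v / k) % 2 = 0 <;> simp [h2] <;> omega

lemma block_filter_card (k : ℕ) (hk : 0 < k) (j c : ℕ) (hc : c < k) :
    ((Finset.Ico (j * k) (j * k + k)).filter (fun v => bitColor k v = c)).card = 1 := by
  have himg : Finset.Ico (j * k) (j * k + k) = (Finset.range k).image (fun i => j * k + i) := by
    ext v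
    simp only [Finset.mem_Ico, Finset.mem_image, Finset.mem_range]
    constructor
    · intro h; exact ⟨v - j * k, by omega, by omega⟩
    · rintro ⟨i, hi, rfl⟩; omega
  have hinj : Function.Injective (fun i => j * k + i) := fun x y h => by
    simpa using h
  rw [himg, Finset.filter_image]
  rw [Finset.card_image_of_injective _ hinj]
  have hcong : (Finset.range k).filter (fun i => bitColor k (j * k + i) = c)
      = (Finset.range k).filter (fun i => (if j % 2 = 0 then i else k - 1 - i) = c) := by
    apply Finset.filter_congr
    intro i hi
    simp only [Finset.mem_range] at hi
    simp [bitColor_block k hk j i hi]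
  rw [hcong]
  by_cases hj : j % 2 = 0
  · have : (Finset.range k).filter (fun i => (if j % 2 = 0 then i else k - 1 - i) = c) = {c} := by
      ext i
      rw [Finset.mem_filter, Finset.mem_range, Finset.mem_singleton, if_pos hj]
      omega
    rw [this, Finset.card_singleton]
  · have : (Finset.range k).filter (fun i => (if j % 2 = 0 then i else k - 1 - i) = c)
        = {k - 1 - c} := by
      ext i
      rw [Finset.mem_filter, Finset.mem_range, Finset.mem_singleton, if_neg hj]
      omega
    rw [this, Finset.card_singleton]

lemma blocks_filter_card (k : ℕ) (hk : 0 < k) (c : ℕ) (hc : c < k) (A : ℕ) :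
    ∀ d, ((Finset.Ico (A * k) ((A + d) * k)).filter (fun v => bitColor k v = c)).card = d := by
  intro d
  induction d with
  | zero => simp
  | succ d ih =>
    have he : (A + (d + 1)) * k = (A + d) * k + k := by ring
    have hle1 : A * k ≤ (A + d) * k := Nat.mul_le_mul_right k (by omega)
    have hsplit : Finset.Ico (A * k) ((A + (d + 1)) * k)
        = Finset.Ico (A * k) ((A + d) * k) ∪ Finset.Ico ((A + d) * k) ((A + d) * k + k) := by
      rw [he, Finset.Ico_union_Ico_eq_Ico hle1 (Nat.le_add_right _ _)]
    rw [hsplit, Finset.filter_union, Finset.card_union_of_disjoint, ih,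
      block_filter_card k hk _ c hc]
    exact Finset.disjoint_filter_filter (Finset.Ico_disjoint_Ico_consecutive _ _ _)

lemma filter_color_sum (k : ℕ) (hk : 0 < k) (s : Finset ℕ) :
    ∑ c ∈ Finset.range k, ((s.filter (fun v => bitColor k v = c)).card) = s.card :=
  (Finset.card_eq_sum_card_fiberwise
    (fun v _ => Finset.mem_range.mpr (bitColor_lt k hk v))).symm

lemma even_filter_card {a b : ℕ} (hab : (a, b) ∈ M.pairs)
    (P : ℕ → Prop) [DecidablePred P]
    (hP : ∀ q ∈ M.pairs, a < q.1 → q.2 < b → (P q.1 ↔ P q.2)) :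
    Even ((Finset.Ico (a + 1) b).filter P).card := by
  classical
  set E := M.pairs.filter (fun q => a < q.1 ∧ q.2 < b ∧ P q.1) with hE
  have hEmem : ∀ q ∈ E, q ∈ M.pairs ∧ a < q.1 ∧ q.2 < b ∧ P q.1 := by
    intro q hq; simpa [hE] using Finset.mem_filter.mp hq
  have key : (Finset.Ico (a + 1) b).filter P = E.biUnion (fun q => {q.1, q.2}) := by
    ext v
    simp only [Finset.mem_filter, Finset.mem_Ico, Finset.mem_biUnion, Finset.mem_insert,
      Finset.mem_singleton]
    constructor
    · rintro ⟨⟨hv1, hv2⟩, hPv⟩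
      have hvn : v < 2 * n := lt_trans hv2 (M.mem_lt _ hab).2
      obtain ⟨q, ⟨hq, hvq⟩, -⟩ := M.covers v hvn
      have hqlt := (M.mem_lt q hq).1
      rcases hvq with h | h
      · refine ⟨q, Finset.mem_filter.mpr ⟨hq, by omega,
          snd_lt_of_fst_mem M hab hq (by omega) (by omega), by rw [h]; exact hPv⟩, Or.inl h.symm⟩
      · have hq1 : a < q.1 := fst_gt_of_snd_mem M hab hq (by omega) (by omega)
        refine ⟨q, Finset.mem_filter.mpr ⟨hq, hq1, by omega,
          (hP q hq hq1 (by omega)).mpr (by rw [h]; exact hPv)⟩, Or.inr h.symm⟩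
    · rintro ⟨q, hqE, hv⟩
      obtain ⟨hq, ha1, hb1, hP1⟩ := hEmem q hqE
      have hqlt := (M.mem_lt q hq).1
      rcases hv with rfl | rfl
      · exact ⟨⟨by omega, by omega⟩, hP1⟩
      · exact ⟨⟨by omega, by omega⟩, (hP q hq ha1 hb1).mp hP1⟩
  have hdisj : ∀ q ∈ E, ∀ q' ∈ E, q ≠ q' →
      Disjoint ({q.1, q.2} : Finset ℕ) {q'.1, q'.2} := by
    intro q hq q' hq' hne
    obtain ⟨hqm, -, -, -⟩ := hEmem q hq
    obtain ⟨hqm', -, -, -⟩ := hEmem q' hq'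
    rw [Finset.disjoint_left]
    intro v hv hv'
    simp only [Finset.mem_insert, Finset.mem_singleton] at hv hv'
    exact hne (pair_eq_of_mem M hqm hqm' v
      (by tauto) (by tauto))
  rw [key, Finset.card_biUnion hdisj]
  have h2 : ∀ q ∈ E, ({q.1, q.2} : Finset ℕ).card = 2 := by
    intro q hq
    have hqlt := (M.mem_lt q (hEmem q hq).1).1
    rw [Finset.card_insert_of_notMem (by simp; omega), Finset.card_singleton]
  rw [Finset.sum_congr rfl h2, Finset.sum_const, smul_eq_mul]
  exact ⟨E.card, by ring⟩

end Aux

/-- A non-crossing perfect matching on bitonically `k`-colored vertices is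
monochromatic iff it has valid block structure and contains no edge as in
Lemma `shortestedge` (properties (i)-(iv)). -/
theorem stmt14 (k n : ℕ) (hk : 2 ≤ k) (hdvd : k ∣ n) (M : NCMatching n) :
    Mono k M ↔
      (ValidBlock k M ∧
        ¬ ∃ p ∈ M.pairs,
          bitColor k p.1 ≠ bitColor k p.2 ∧
          p.1 / k ≠ p.2 / k ∧
          (∀ q ∈ M.pairs, p.1 < q.1 → q.2 < p.2 →
            bitColor k q.1 = bitColor k q.2) ∧
          Odd (p.2 / k - p.1 / k - 1) ∧
          p.2 % k = p.1 % k + 1) := by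
  have hk0 : 0 < k := by omega
  constructor
  · intro hM
    constructor
    · -- Mono implies ValidBlock
      intro u v hv hblock huv hu
      by_contra hvout
      have hune : (M.pairs.filter fun p => p.1 = u).Nonempty := by
        rw [← Finset.card_pos]
        unfold NCMatching.out at hu
        omega
      obtain ⟨q, hqf⟩ := hune
      obtain ⟨hq, hq1⟩ := Finset.mem_filter.mp hqf
      obtain ⟨q', ⟨hq', hvq'⟩, -⟩ := M.covers v hv
      have hq'2 : q'.2 = v := by
        rcases hvq' with h | h
        · exfalso; apply hvout; rw [← h]; exact out_fst_eq_one M hq'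
        · exact h
      have hcu := hM q hq
      have hcv := hM q' hq'
      have hqlt := M.mem_lt q hq
      have hq'lt := M.mem_lt q' hq'
      by_cases heq : q = q'
      · have hq2 : q.2 = v := by rw [heq]; exact hq'2
        have hne := bitColor_ne_of_same_block k hk0 hblock (by omega : u ≠ v)
        rw [hq1, hq2] at hcu
        exact hne hcu
      · -- q = (u, u') with u' outside the block, q' = (w, v) with w outside
        have hmodu := Nat.div_add_mod u k
        have hmodv := Nat.div_add_mod v k
        have hmu := Nat.mod_lt u hk0
        have hmv := Nat.mod_lt v hk0
        have hdivu' : u / k < q.2 / k := by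
          rcases Nat.lt_or_ge (u / k) (q.2 / k) with h | h
          · exact h
          have hle : u / k ≥ q.2 / k := h
          have hle2 : u / k ≤ q.2 / k := by
            have : u ≤ q.2 := by omega
            exact Nat.div_le_div_right this
          have hbe : q.2 / k = u / k := by omega
          exfalso
          refine bitColor_ne_of_same_block k hk0 (u := u) (v := q.2) (by rw [hbe]) (by omega) ?_
          rw [← hq1]; exact hcu
        have hdivw : q'.1 / k < v / k := by
          rcases Nat.lt_or_ge (q'.1 / k) (v / k) with h | h
          · exact h
          have hle2 : q'.1 / k ≤ v / k := by
            have : q'.1 ≤ v := by omega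
            exact Nat.div_le_div_right this
          have hbe : q'.1 / k = v / k := by omega
          exfalso
          refine bitColor_ne_of_same_block k hk0 (u := q'.1) (v := v) hbe (by omega) ?_
          rw [← hq'2]; exact hcv
        -- numeric bounds
        have hub : (u / k + 1) * k ≤ q.2 := (Nat.le_div_iff_mul_le hk0).mp hdivu'
        have hwb : q'.1 < v / k * k := by
          have h1 : q'.1 < (q'.1 / k + 1) * k := by
            have hm' : q'.1 / k * k + q'.1 % k = q'.1 := by
              rw [mul_comm]; exact Nat.div_add_mod q'.1 k
            have := Nat.mod_lt q'.1 hk0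
            have he : (q'.1 / k + 1) * k = q'.1 / k * k + k := by ring
            omega
          have h2 : (q'.1 / k + 1) * k ≤ v / k * k := Nat.mul_le_mul_right k hdivw
          omega
        have hvb : v < (u / k + 1) * k := by
          rw [hblock]
          have hm' : v / k * k + v % k = v := by
            rw [mul_comm]; exact Nat.div_add_mod v k
          have he : (v / k + 1) * k = v / k * k + k := by ring
          omega
        have hub2 : v / k * k ≤ u := by
          rw [← hblock]
          have hm' : u / k * k + u % k = u := by
            rw [mul_comm]; exact Nat.div_add_mod u k
          omega
        -- crossing: q'.1 < q.1 ∧ q.1 < q'.2 ∧ q'.2 < q.2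
        exact M.noncross q' hq' q hq ⟨by omega, by omega, by omega⟩
    · rintro ⟨p, hp, hbi, -⟩
      exact hbi (hM p hp)
  · rintro ⟨hVB, hno⟩
    by_contra hnm
    unfold Mono at hnm
    push_neg at hnm
    obtain ⟨p0, hp0, hbi0⟩ := hnm
    have hne : (M.pairs.filter fun p => bitColor k p.1 ≠ bitColor k p.2).Nonempty :=
      ⟨p0, Finset.mem_filter.mpr ⟨hp0, hbi0⟩⟩
    obtain ⟨p, hpmem, hmin⟩ := Finset.exists_min_image _ (fun p => p.2 - p.1) hne
    obtain ⟨hp, hbi⟩ := Finset.mem_filter.mp hpmem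
    obtain ⟨a, b⟩ := p
    simp only at hbi hmin hp
    apply hno
    have hab := M.mem_lt (a, b) hp
    simp only at hab
    -- property (ii): inner edges are monochromatic
    have hinner : ∀ q ∈ M.pairs, a < q.1 → q.2 < b → bitColor k q.1 = bitColor k q.2 := by
      intro q hq h1 h2
      by_contra hne'
      have hqB : q ∈ M.pairs.filter fun p => bitColor k p.1 ≠ bitColor k p.2 :=
        Finset.mem_filter.mpr ⟨hq, hne'⟩
      have hm := hmin q hqB
      have hqlt := (M.mem_lt q hq).1
      omega
    -- property (i): different blocks
    have hblocks : a / k ≠ b / k := by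
      intro h
      have h1 : M.out a = 1 := out_fst_eq_one M hp
      have h0 : M.out b = 0 := out_snd_eq_zero M hp
      have := hVB a b (by omega) h hab.1 h1
      omega
    have hAB : a / k < b / k :=
      lt_of_le_of_ne (Nat.div_le_div_right (le_of_lt hab.1)) hblocks
    -- notation
    obtain ⟨A, hA⟩ : ∃ A, a / k = A := ⟨_, rfl⟩
    obtain ⟨B, hB⟩ : ∃ B, b / k = B := ⟨_, rfl⟩
    obtain ⟨r, hr⟩ : ∃ r, a % k = r := ⟨_, rfl⟩
    obtain ⟨s, hs⟩ : ∃ s, b % k = s := ⟨_, rfl⟩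
    have har : A * k + r = a := by rw [← hA, ← hr, mul_comm]; exact Nat.div_add_mod a k
    have hbs : B * k + s = b := by rw [← hB, ← hs, mul_comm]; exact Nat.div_add_mod b k
    have hrk : r < k := by rw [← hr]; exact Nat.mod_lt a hk0
    have hsk : s < k := by rw [← hs]; exact Nat.mod_lt b hk0
    have hABlt : A < B := by rw [← hA, ← hB]; exact hAB
    obtain ⟨m, hm⟩ : ∃ m, B - A - 1 = m := ⟨_, rfl⟩
    have hBm : B = A + 1 + m := by omega
    have heA : (A + 1) * k = A * k + k := by ring
    have h1 : a + 1 ≤ (A + 1) * k := by omega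
    have h2 : (A + 1) * k ≤ B * k := Nat.mul_le_mul_right k (by omega)
    have h3 : B * k ≤ b := by omega
    -- the three segments
    have hsplit : Finset.Ico (a + 1) b =
        Finset.Ico (a + 1) ((A + 1) * k) ∪
          (Finset.Ico ((A + 1) * k) (B * k) ∪ Finset.Ico (B * k) b) := by
      rw [Finset.Ico_union_Ico_eq_Ico h2 h3,
        Finset.Ico_union_Ico_eq_Ico h1 (le_trans h2 h3)]
    have hd23 : Disjoint (Finset.Ico ((A + 1) * k) (B * k)) (Finset.Ico (B * k) b) :=
      Finset.Ico_disjoint_Ico_consecutive _ _ _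
    have hd12 : Disjoint (Finset.Ico (a + 1) ((A + 1) * k))
        (Finset.Ico ((A + 1) * k) (B * k)) :=
      Finset.Ico_disjoint_Ico_consecutive _ _ _
    have hd13 : Disjoint (Finset.Ico (a + 1) ((A + 1) * k)) (Finset.Ico (B * k) b) := by
      rw [Finset.disjoint_left]
      intro v hv hv'
      simp only [Finset.mem_Ico] at hv hv'
      omega
    -- per-color cardinalities
    have hmid : ∀ c < k,
        ((Finset.Ico ((A + 1) * k) (B * k)).filter (fun v => bitColor k v = c)).card = m := by
      intro c hc
      have : B * k = (A + 1 + m) * k := by rw [← hBm]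
      rw [this]
      exact blocks_filter_card k hk0 c hc (A + 1) m
    have htle : ∀ c : ℕ,
        ((Finset.Ico (a + 1) ((A + 1) * k)).filter (fun v => bitColor k v = c)).card ≤ 1 := by
      intro c
      rcases Nat.lt_or_ge c k with hc | hc
      · calc ((Finset.Ico (a + 1) ((A + 1) * k)).filter (fun v => bitColor k v = c)).card
            ≤ ((Finset.Ico (A * k) (A * k + k)).filter (fun v => bitColor k v = c)).card := by
              apply Finset.card_le_card
              apply Finset.filter_subset_filter
              apply Finset.Ico_subset_Ico (by omega) (by omega)
          _ = 1 := block_filter_card k hk0 A c hc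
      · have : (Finset.Ico (a + 1) ((A + 1) * k)).filter (fun v => bitColor k v = c) = ∅ := by
          rw [Finset.filter_eq_empty_iff]
          intro v _
          have := bitColor_lt k hk0 v
          omega
        rw [this]; simp
    have hhle : ∀ c : ℕ,
        ((Finset.Ico (B * k) b).filter (fun v => bitColor k v = c)).card ≤ 1 := by
      intro c
      rcases Nat.lt_or_ge c k with hc | hc
      · calc ((Finset.Ico (B * k) b).filter (fun v => bitColor k v = c)).card
            ≤ ((Finset.Ico (B * k) (B * k + k)).filter (fun v => bitColor k v = c)).card := by
              apply Finset.card_le_card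
              apply Finset.filter_subset_filter
              apply Finset.Ico_subset_Ico (le_refl _) (by omega)
          _ = 1 := block_filter_card k hk0 B c hc
      · have : (Finset.Ico (B * k) b).filter (fun v => bitColor k v = c) = ∅ := by
          rw [Finset.filter_eq_empty_iff]
          intro v _
          have := bitColor_lt k hk0 v
          omega
        rw [this]; simp
    have htsum : ∑ c ∈ Finset.range k,
        ((Finset.Ico (a + 1) ((A + 1) * k)).filter (fun v => bitColor k v = c)).card
          = k - r - 1 := by
      rw [filter_color_sum k hk0, Nat.card_Ico]
      omega
    have hhsum : ∑ c ∈ Finset.range k,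
        ((Finset.Ico (B * k) b).filter (fun v => bitColor k v = c)).card = s := by
      rw [filter_color_sum k hk0, Nat.card_Ico]
      omega
    have hkey : ∀ c < k,
        Even (((Finset.Ico (a + 1) ((A + 1) * k)).filter (fun v => bitColor k v = c)).card
          + (m + ((Finset.Ico (B * k) b).filter (fun v => bitColor k v = c)).card)) := by
      intro c hc
      have hev := even_filter_card M hp (fun v => bitColor k v = c)
        (fun q hq hq1 hq2 => by
          show bitColor k q.1 = c ↔ bitColor k q.2 = c
          rw [hinner q hq hq1 hq2])
      rw [hsplit, Finset.filter_union, Finset.filter_union,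
        Finset.card_union_of_disjoint
          (Finset.disjoint_union_right.mpr
            ⟨Finset.disjoint_filter_filter hd12, Finset.disjoint_filter_filter hd13⟩),
        Finset.card_union_of_disjoint
          (Finset.disjoint_filter_filter hd23), hmid c hc] at hev
      exact hev
    -- parity dichotomy
    rcases Nat.even_or_odd m with hme | hmo
    · -- m even: derive the contradiction bitColor a = bitColor b
      exfalso
      have hteqh : ∀ c ∈ Finset.range k,
          ((Finset.Ico (a + 1) ((A + 1) * k)).filter (fun v => bitColor k v = c)).card
            = ((Finset.Ico (B * k) b).filter (fun v => bitColor k v = c)).card := by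
        intro c hc
        rw [Finset.mem_range] at hc
        obtain ⟨x, hx⟩ := hkey c hc
        obtain ⟨mm, hmm⟩ := hme
        have := htle c
        have := hhle c
        omega
      have hsums : k - r - 1 = s := by
        rw [← htsum, ← hhsum]
        exact Finset.sum_congr rfl hteqh
      obtain ⟨mm, hmm⟩ := hme
      apply hbi
      have hca : bitColor k a = if A % 2 = 0 then r else k - 1 - r := by
        unfold bitColor; rw [hA, hr]
      have hcb : bitColor k b = if B % 2 = 0 then s else k - 1 - s := by
        unfold bitColor; rw [hB, hs]
      rw [hca, hcb]
      by_cases hA2 : A % 2 = 0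
      · rw [if_pos hA2, if_neg (by omega)]
        omega
      · rw [if_neg hA2, if_pos (by omega)]
        omega
    · -- m odd: conclude
      refine ⟨(a, b), hp, hbi, hblocks, hinner, ?_, ?_⟩
      · show Odd (b / k - a / k - 1)
        rw [hA, hB, hm]
        exact hmo
      · show b % k = a % k + 1
        obtain ⟨mm, hmm⟩ := hmo
        have hth1 : ∀ c ∈ Finset.range k,
            ((Finset.Ico (a + 1) ((A + 1) * k)).filter (fun v => bitColor k v = c)).card
              + ((Finset.Ico (B * k) b).filter (fun v => bitColor k v = c)).card = 1 := by
          intro c hc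
          rw [Finset.mem_range] at hc
          obtain ⟨x, hx⟩ := hkey c hc
          have := htle c
          have := hhle c
          omega
        have hsums : (k - r - 1) + s = k := by
          rw [← htsum, ← hhsum, ← Finset.sum_add_distrib]
          rw [Finset.sum_congr rfl hth1, Finset.sum_const, Finset.card_range,
            smul_eq_mul, mul_one]
        rw [hr, hs]
        omega
end
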